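/- arXiv:1507.02201 — 6 statements merged into one kernel-verified Lean document; each statement's English description precedes it below -/
import Mathlib

section
/- Let Γ be a subgroup of the Euclidean group E(n). Then Γ acts properly discontinuously on ℝⁿ (for every pair of compact sets K, L ⊆ ℝⁿ, the set of γ ∈ Γ with γ•K ∩ L ≠ ∅ is finite) with compact orbit-space ℝⁿ/Γ if and only if Γ is a discrete uniform subgroup of E(n), i.e., Γ is discrete and the coset space E(n)/Γ with the quotient topology is compact. -/
/-- Application of a matrix to a vector of Euclidean space, `x ↦ Mx`. -/
def EuclideanGrp.mapp {n : ℕ} (M : Matrix (Fin n) (Fin n) ℝ)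
    (x : EuclideanSpace ℝ (Fin n)) : EuclideanSpace ℝ (Fin n) := WithLp.toLp 2 (M.mulVec x)

/-- The Euclidean group `E(n)`: pairs `(A, a)` with `A` an `n × n` real orthogonal
matrix and `a ∈ ℝⁿ`, with group law `(A,a)(B,b) = (AB, Ab + a)`. -/
structure EuclideanGrp (n : ℕ) where
  A : Matrix.orthogonalGroup (Fin n) ℝ
  a : EuclideanSpace ℝ (Fin n)

namespace EuclideanGrp

variable {n : ℕ}

lemma mapp_add (M : Matrix (Fin n) (Fin n) ℝ) (x y : EuclideanSpace ℝ (Fin n)) :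
    mapp M (x + y) = mapp M x + mapp M y := by
  simp [mapp, Matrix.mulVec_add]
lemma mapp_mapp (M N : Matrix (Fin n) (Fin n) ℝ) (x : EuclideanSpace ℝ (Fin n)) :
    mapp M (mapp N x) = mapp (M * N) x := by
  simp [mapp, Matrix.mulVec_mulVec]
lemma mapp_one (x : EuclideanSpace ℝ (Fin n)) : mapp 1 x = x := by simp [mapp]
lemma mapp_zero (M : Matrix (Fin n) (Fin n) ℝ) : mapp M 0 = 0 := by simp [mapp]

@[ext] lemma ext {g h : EuclideanGrp n} (hA : g.A = h.A) (ha : g.a = h.a) : g = h := by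
  cases g; cases h; simp_all

/-- The group law `(A,a)(B,b) = (AB, Ab + a)` on `E(n)`. -/
instance : Group (EuclideanGrp n) where
  mul g h := ⟨g.A * h.A, mapp (g.A : Matrix (Fin n) (Fin n) ℝ) h.a + g.a⟩
  one := ⟨1, 0⟩
  inv g := ⟨g.A⁻¹, -mapp ((g.A⁻¹ : Matrix.orthogonalGroup (Fin n) ℝ) : Matrix (Fin n) (Fin n) ℝ) g.a⟩
  mul_assoc g h k := by
    ext : 1
    · exact mul_assoc _ _ _
    · show mapp (↑(g.A * h.A)) k.a + (mapp (↑g.A) h.a + g.a)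
        = mapp (↑g.A) (mapp (↑h.A) k.a + h.a) + g.a
      simp [mapp_add, mapp_mapp, add_assoc]
  one_mul g := by
    ext : 1
    · exact one_mul _
    · show mapp (↑(1 : Matrix.orthogonalGroup (Fin n) ℝ)) g.a + 0 = g.a
      simp [mapp_one]
  mul_one g := by
    ext : 1
    · exact mul_one _
    · show mapp (↑g.A) 0 + g.a = g.a
      simp [mapp_zero]
  inv_mul_cancel g := by
    ext : 1
    · exact inv_mul_cancel _
    · show mapp (↑(g.A⁻¹)) g.a + -mapp (↑(g.A⁻¹)) g.a = 0
      simp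

/-- `E(n)` is topologized as a subspace of the product of the space of
`n × n` real matrices with `ℝⁿ`. -/
noncomputable instance : TopologicalSpace (EuclideanGrp n) :=
  TopologicalSpace.induced (fun g => ((g.A : Matrix (Fin n) (Fin n) ℝ), g.a)) inferInstance

/-- The action of `E(n)` on `ℝⁿ` given by `(A,a) • x = Ax + a`. -/
instance : MulAction (EuclideanGrp n) (EuclideanSpace ℝ (Fin n)) where
  smul g x := mapp (g.A : Matrix (Fin n) (Fin n) ℝ) x + g.a
  one_smul x := by
    show mapp (↑(1 : Matrix.orthogonalGroup (Fin n) ℝ)) x + 0 = x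
    simp [mapp_one]
  mul_smul g h x := by
    show mapp (↑(g.A * h.A)) x + (mapp (↑g.A) h.a + g.a)
      = mapp (↑g.A) (mapp (↑h.A) x + h.a) + g.a
    simp [mapp_add, mapp_mapp, add_assoc]

end EuclideanGrp

namespace EuclideanGrp

variable {n : ℕ}

/-- The defining embedding of `E(n)` into matrices × vectors. -/
noncomputable def ee (g : EuclideanGrp n) :
    Matrix (Fin n) (Fin n) ℝ × EuclideanSpace ℝ (Fin n) :=
  ((g.A : Matrix (Fin n) (Fin n) ℝ), g.a)

lemma inducing_ee : Topology.IsInducing (ee (n := n)) := ⟨rfl⟩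

lemma injective_ee : Function.Injective (ee (n := n)) := by
  intro g h hgh
  have h1 := congrArg Prod.fst hgh
  have h2 := congrArg Prod.snd hgh
  exact EuclideanGrp.ext (Subtype.coe_injective h1) h2

lemma embedding_ee : Topology.IsEmbedding (ee (n := n)) := ⟨inducing_ee, injective_ee⟩

instance : T2Space (EuclideanGrp n) := embedding_ee.t2Space

lemma continuous_ee : Continuous (ee (n := n)) := inducing_ee.continuous

lemma continuous_coeA : Continuous fun g : EuclideanGrp n => (g.A : Matrix (Fin n) (Fin n) ℝ) :=
  continuous_fst.comp continuous_ee

lemma continuous_a : Continuous fun g : EuclideanGrp n => g.a :=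
  continuous_snd.comp continuous_ee

lemma _root_.Continuous.eg_mapp {X : Type*} [TopologicalSpace X]
    {M : X → Matrix (Fin n) (Fin n) ℝ} {v : X → EuclideanSpace ℝ (Fin n)}
    (hM : Continuous M) (hv : Continuous v) :
    Continuous fun x => mapp (M x) (v x) := by
  have hv' : Continuous fun x => ((v x : EuclideanSpace ℝ (Fin n)) : Fin n → ℝ) :=
    (PiLp.continuousLinearEquiv 2 ℝ (fun _ : Fin n => ℝ)).continuous.comp hv
  have h : Continuous fun x => (M x).mulVec (v x) := hM.matrix_mulVec hv'
  exact ((PiLp.continuousLinearEquiv 2 ℝ (fun _ : Fin n => ℝ)).symm.continuous).comp h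

lemma coe_inv_A (A : Matrix.orthogonalGroup (Fin n) ℝ) :
    ((A⁻¹ : Matrix.orthogonalGroup (Fin n) ℝ) : Matrix (Fin n) (Fin n) ℝ)
      = star (A : Matrix (Fin n) (Fin n) ℝ) := rfl

instance : IsTopologicalGroup (EuclideanGrp n) where
  continuous_mul := by
    rw [inducing_ee.continuous_iff]
    show Continuous fun p : EuclideanGrp n × EuclideanGrp n =>
      (((p.1.A : Matrix (Fin n) (Fin n) ℝ) * p.2.A : Matrix (Fin n) (Fin n) ℝ),
        mapp (p.1.A : Matrix (Fin n) (Fin n) ℝ) p.2.a + p.1.a)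
    exact Continuous.prodMk
      ((continuous_coeA.comp continuous_fst).matrix_mul (continuous_coeA.comp continuous_snd))
      (((continuous_coeA.comp continuous_fst).eg_mapp (continuous_a.comp continuous_snd)).add
        (continuous_a.comp continuous_fst))
  continuous_inv := by
    rw [inducing_ee.continuous_iff]
    show Continuous fun g : EuclideanGrp n =>
      ((star (g.A : Matrix (Fin n) (Fin n) ℝ) : Matrix (Fin n) (Fin n) ℝ),
        -(mapp (star (g.A : Matrix (Fin n) (Fin n) ℝ)) g.a))
    have hstar : Continuous fun g : EuclideanGrp n =>
        (star (g.A : Matrix (Fin n) (Fin n) ℝ) : Matrix (Fin n) (Fin n) ℝ) :=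
      continuous_star.comp continuous_coeA
    exact Continuous.prodMk hstar ((hstar.eg_mapp continuous_a).neg)

instance : ContinuousSMul (EuclideanGrp n) (EuclideanSpace ℝ (Fin n)) where
  continuous_smul := by
    show Continuous fun p : EuclideanGrp n × EuclideanSpace ℝ (Fin n) =>
      mapp (p.1.A : Matrix (Fin n) (Fin n) ℝ) p.2 + p.1.a
    exact ((continuous_coeA.comp continuous_fst).eg_mapp continuous_snd).add
      (continuous_a.comp continuous_fst)

open scoped Matrix

lemma dot_self_eq (M : Matrix (Fin n) (Fin n) ℝ) (hM : star M * M = 1) (x : Fin n → ℝ) :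
    M.mulVec x ⬝ᵥ M.mulVec x = x ⬝ᵥ x := by
  have hMt : Mᵀ * M = 1 := by
    rwa [Matrix.star_eq_conjTranspose, Matrix.conjTranspose_eq_transpose_of_trivial] at hM
  calc M.mulVec x ⬝ᵥ M.mulVec x
      = Matrix.vecMul (M.mulVec x) M ⬝ᵥ x := Matrix.dotProduct_mulVec _ M x
    _ = Matrix.vecMul (Matrix.vecMul x Mᵀ) M ⬝ᵥ x := by
        rw [show M.mulVec x = Matrix.vecMul x Mᵀ by
          rw [← Matrix.mulVec_transpose, Matrix.transpose_transpose]]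
    _ = Matrix.vecMul x (Mᵀ * M) ⬝ᵥ x := by rw [Matrix.vecMul_vecMul]
    _ = x ⬝ᵥ x := by rw [hMt, Matrix.vecMul_one]

lemma norm_mapp (M : Matrix (Fin n) (Fin n) ℝ) (hM : star M * M = 1)
    (x : EuclideanSpace ℝ (Fin n)) : ‖mapp M x‖ = ‖x‖ := by
  rw [EuclideanSpace.norm_eq, EuclideanSpace.norm_eq]
  congr 1
  have h := dot_self_eq M hM x
  simpa [mapp, dotProduct, Real.norm_eq_abs, pow_two, abs_mul_abs_self] using h

lemma isCompact_orthGrp :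
    IsCompact (Matrix.orthogonalGroup (Fin n) ℝ : Set (Matrix (Fin n) (Fin n) ℝ)) := by
  have hclosed : IsClosed (Matrix.orthogonalGroup (Fin n) ℝ : Set (Matrix (Fin n) (Fin n) ℝ)) := by
    have heq : (Matrix.orthogonalGroup (Fin n) ℝ : Set (Matrix (Fin n) (Fin n) ℝ))
        = (fun M : Matrix (Fin n) (Fin n) ℝ => star M * M) ⁻¹' {1} := by
      ext M
      simp [SetLike.mem_coe, Matrix.mem_orthogonalGroup_iff']
      rw [Matrix.star_eq_conjTranspose, Matrix.conjTranspose_eq_transpose_of_trivial]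
    rw [heq]
    exact IsClosed.preimage (continuous_star.matrix_mul continuous_id) isClosed_singleton
  have hsub : (Matrix.orthogonalGroup (Fin n) ℝ : Set (Matrix (Fin n) (Fin n) ℝ)) ⊆
      Set.univ.pi fun _ : Fin n => Set.univ.pi fun _ : Fin n => Set.Icc (-1 : ℝ) 1 := by
    intro M hM
    have hM' : Mᵀ * M = 1 := by
      have := (Matrix.mem_orthogonalGroup_iff' (Fin n) ℝ).mp hM
      simpa [Matrix.star_eq_conjTranspose, Matrix.conjTranspose] using this
    intro i _ j _
    have hdiag : ∑ k, M k j * M k j = 1 := by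
      have := congrFun (congrFun hM' j) j
      simpa [Matrix.mul_apply, Matrix.transpose_apply] using this
    have hle : M i j * M i j ≤ 1 := by
      rw [← hdiag]
      exact Finset.single_le_sum (f := fun k => M k j * M k j)
        (fun k _ => mul_self_nonneg _) (Finset.mem_univ i)
    have habs : |M i j| ≤ 1 := abs_le_one_iff_mul_self_le_one.mpr hle
    exact abs_le.mp habs
  exact ((isCompact_univ_pi fun _ => isCompact_univ_pi fun _ =>
    isCompact_Icc)).of_isClosed_subset hclosed hsub

lemma isCompact_normA_le (R : ℝ) : IsCompact {g : EuclideanGrp n | ‖g.a‖ ≤ R} := by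
  rw [embedding_ee.isCompact_iff]
  have himg : ee '' {g : EuclideanGrp n | ‖g.a‖ ≤ R}
      = (Matrix.orthogonalGroup (Fin n) ℝ : Set (Matrix (Fin n) (Fin n) ℝ))
        ×ˢ Metric.closedBall (0 : EuclideanSpace ℝ (Fin n)) R := by
    ext p
    constructor
    · rintro ⟨g, hg, rfl⟩
      exact ⟨g.A.2, by simpa [ee, mem_closedBall_zero_iff] using hg⟩
    · rintro ⟨hM, ha⟩
      refine ⟨⟨⟨p.1, hM⟩, p.2⟩, by simpa [mem_closedBall_zero_iff] using ha, ?_⟩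
      simp [ee]
  rw [himg]
  exact isCompact_orthGrp.prod (isCompact_closedBall 0 R)

/-- A discrete subgroup of a T1 topological group meets every compact set in a
finite set. -/
lemma _root_.Subgroup.finite_inter_compact_of_discrete {G : Type*} [Group G] [TopologicalSpace G]
    [IsTopologicalGroup G] [T1Space G] (Γ : Subgroup G) [DiscreteTopology Γ]
    {C : Set G} (hC : IsCompact C) : ((Γ : Set G) ∩ C).Finite := by
  by_contra hfin
  have hinf : Set.Infinite ((Γ : Set G) ∩ C) := hfin
  obtain ⟨x, -, hx⟩ := hinf.exists_accPt_of_subset_isCompact hC Set.inter_subset_right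
  -- a neighborhood of 1 meeting Γ only at 1
  have hdisc : DiscreteTopology ((Γ : Set G) : Set G) := by
    convert (inferInstance : DiscreteTopology Γ) using 2
    rfl
  obtain ⟨V, hV, hV1⟩ := nhds_inter_eq_singleton_of_mem_discrete (s := (Γ : Set G))
    (x := (1 : G)) (isDiscrete_iff_discreteTopology.mpr hdisc) Γ.one_mem
  -- a neighborhood W of x with a⁻¹ * b ∈ V for a b ∈ W
  have hcont : Filter.Tendsto (fun p : G × G => p.1⁻¹ * p.2) (nhds (x, x)) (nhds 1) := by
    have : Continuous fun p : G × G => p.1⁻¹ * p.2 :=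
      (continuous_inv.comp continuous_fst).mul continuous_snd
    have h := this.continuousAt (x := (x, x))
    simpa [ContinuousAt] using h
  obtain ⟨U₁, hU₁, U₂, hU₂, hU⟩ := mem_nhds_prod_iff.mp (hcont hV)
  set W := U₁ ∩ U₂ with hW
  have hWx : W ∈ nhds x := Filter.inter_mem hU₁ hU₂
  obtain ⟨y₁, ⟨hy₁W, hy₁⟩, hy₁x⟩ := accPt_iff_nhds.mp hx W hWx
  have hW'x : W \ {y₁} ∈ nhds x := by
    refine Filter.inter_mem hWx (isOpen_compl_singleton.mem_nhds ?_)
    simp [Ne.symm hy₁x]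
  obtain ⟨y₂, ⟨⟨hy₂W, hy₂ne⟩, hy₂⟩, hy₂x⟩ := accPt_iff_nhds.mp hx _ hW'x
  have hmem : y₁⁻¹ * y₂ ∈ V ∩ (Γ : Set G) := by
    refine ⟨hU (Set.mk_mem_prod hy₁W.1 hy₂W.2), mul_mem (inv_mem hy₁.1) hy₂.1⟩
  rw [hV1] at hmem
  have : y₁ = y₂ := inv_mul_eq_one.mp hmem
  exact hy₂ne (by simp [this])

lemma smul_def' (g : EuclideanGrp n) (x : EuclideanSpace ℝ (Fin n)) :
    g • x = mapp (g.A : Matrix (Fin n) (Fin n) ℝ) x + g.a := rfl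

lemma a_one : (1 : EuclideanGrp n).a = 0 := rfl

lemma norm_mapp' (A : Matrix.orthogonalGroup (Fin n) ℝ) (x : EuclideanSpace ℝ (Fin n)) :
    ‖mapp (A : Matrix (Fin n) (Fin n) ℝ) x‖ = ‖x‖ :=
  norm_mapp _ (Matrix.UnitaryGroup.star_mul_self A) x

/-- Properly discontinuous from discrete. -/
lemma finite_of_discrete (Γ : Subgroup (EuclideanGrp n)) (hd : DiscreteTopology Γ)
    (K L : Set (EuclideanSpace ℝ (Fin n))) (hK : IsCompact K) (hL : IsCompact L) :
    {γ : EuclideanGrp n | γ ∈ Γ ∧ ((fun x => γ • x) '' K ∩ L).Nonempty}.Finite := by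
  obtain ⟨r₁, hr₁⟩ := hK.isBounded.subset_closedBall 0
  obtain ⟨r₂, hr₂⟩ := hL.isBounded.subset_closedBall 0
  have hsub : {γ : EuclideanGrp n | γ ∈ Γ ∧ ((fun x => γ • x) '' K ∩ L).Nonempty}
      ⊆ (Γ : Set (EuclideanGrp n)) ∩ {g | ‖g.a‖ ≤ r₂ + r₁} := by
    rintro γ ⟨hγ, y, ⟨x, hxK, rfl⟩, hyL⟩
    refine ⟨hγ, ?_⟩
    have hax : γ.a = γ • x - mapp (γ.A : Matrix (Fin n) (Fin n) ℝ) x := by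
      rw [smul_def']; abel
    have h1 : ‖γ • x‖ ≤ r₂ := mem_closedBall_zero_iff.mp (hr₂ hyL)
    have h2 : ‖mapp (γ.A : Matrix (Fin n) (Fin n) ℝ) x‖ ≤ r₁ := by
      rw [norm_mapp']
      exact mem_closedBall_zero_iff.mp (hr₁ hxK)
    calc ‖γ.a‖ = ‖γ • x - mapp (γ.A : Matrix (Fin n) (Fin n) ℝ) x‖ := by rw [hax]
      _ ≤ ‖γ • x‖ + ‖mapp (γ.A : Matrix (Fin n) (Fin n) ℝ) x‖ := norm_sub_le _ _
      _ ≤ r₂ + r₁ := add_le_add h1 h2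
  exact (Γ.finite_inter_compact_of_discrete (isCompact_normA_le (r₂ + r₁))).subset hsub

/-- Discrete from properly discontinuous. -/
lemma discrete_of_finite (Γ : Subgroup (EuclideanGrp n))
    (h : ∀ K L : Set (EuclideanSpace ℝ (Fin n)), IsCompact K → IsCompact L →
      {γ : EuclideanGrp n | γ ∈ Γ ∧ ((fun x => γ • x) '' K ∩ L).Nonempty}.Finite) :
    DiscreteTopology Γ := by
  set K : Set (EuclideanSpace ℝ (Fin n)) := Metric.closedBall 0 1 with hKdef
  have hF := h K K (isCompact_closedBall 0 1) (isCompact_closedBall 0 1)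
  set F := {γ : EuclideanGrp n | γ ∈ Γ ∧ ((fun x => γ • x) '' K ∩ K).Nonempty} with hFdef
  -- the open set
  set V : Set (EuclideanGrp n) := {g | ‖g.a‖ < 1} \ (F \ {1}) with hVdef
  have hVopen : IsOpen V := by
    refine IsOpen.sdiff ?_ ((hF.subset Set.diff_subset).isClosed)
    have : ({g : EuclideanGrp n | ‖g.a‖ < 1}) = (fun g : EuclideanGrp n => g.a) ⁻¹' {a | ‖a‖ < 1} := rfl
    rw [this]
    exact continuous_a.isOpen_preimage _ (isOpen_lt (continuous_norm) continuous_const)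
  have hsingle : ((↑) : Γ → EuclideanGrp n) ⁻¹' V = {1} := by
    ext γ
    simp only [Set.mem_preimage, Set.mem_singleton_iff, hVdef, Set.mem_diff, Set.mem_setOf_eq]
    constructor
    · rintro ⟨hlt, hnot⟩
      have hγF : (γ : EuclideanGrp n) ∈ F := by
        refine ⟨γ.2, (γ : EuclideanGrp n) • (0 : EuclideanSpace ℝ (Fin n)), ⟨0, by
          simp [hKdef], rfl⟩, ?_⟩
        have : (γ : EuclideanGrp n) • (0 : EuclideanSpace ℝ (Fin n)) = (γ : EuclideanGrp n).a := by
          simp [smul_def', mapp_zero]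
        rw [this, hKdef, mem_closedBall_zero_iff]
        exact le_of_lt hlt
      have : (γ : EuclideanGrp n) ∈ ({1} : Set (EuclideanGrp n)) := by
        by_contra hne
        exact hnot ⟨hγF, hne⟩
      exact Subtype.coe_injective (by simpa using this)
    · rintro rfl
      constructor
      · simp [a_one]
      · rintro ⟨-, hne⟩
        exact hne rfl
  have : IsOpen ({1} : Set Γ) := by
    rw [← hsingle]
    exact hVopen.preimage continuous_subtype_val
  exact discreteTopology_iff_isOpen_singleton_one.mpr this

instance (Γ : Subgroup (EuclideanGrp n)) :
    ContinuousConstSMul Γ (EuclideanSpace ℝ (Fin n)) :=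
  ⟨fun γ => by
    show Continuous fun x : EuclideanSpace ℝ (Fin n) => (γ : EuclideanGrp n) • x
    exact continuous_const_smul _⟩

lemma norm_inv_smul_zero (h : EuclideanGrp n) :
    ‖h⁻¹ • (0 : EuclideanSpace ℝ (Fin n))‖ = ‖h.a‖ := by
  have h1 : h⁻¹ • (0 : EuclideanSpace ℝ (Fin n))
      = -mapp ((h.A⁻¹ : Matrix.orthogonalGroup (Fin n) ℝ) : Matrix (Fin n) (Fin n) ℝ) h.a := by
    show mapp ((h.A⁻¹ : Matrix.orthogonalGroup (Fin n) ℝ) : Matrix (Fin n) (Fin n) ℝ) 0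
        + -mapp ((h.A⁻¹ : Matrix.orthogonalGroup (Fin n) ℝ) : Matrix (Fin n) (Fin n) ℝ) h.a = _
    rw [mapp_zero, zero_add]
  rw [h1, norm_neg, norm_mapp']

lemma exists_bound_orbit (Γ : Subgroup (EuclideanGrp n))
    (hc : CompactSpace (Quotient (MulAction.orbitRel Γ (EuclideanSpace ℝ (Fin n))))) :
    ∃ R : ℝ, ∀ x : EuclideanSpace ℝ (Fin n), ∃ γ : Γ, ‖(γ : EuclideanGrp n) • x‖ ≤ R := by
  set X := EuclideanSpace ℝ (Fin n)
  letI := MulAction.orbitRel Γ X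
  have hcover : Set.univ ⊆ ⋃ (m : ℕ),
      (Quotient.mk' '' (Metric.ball (0 : X) m) :
        Set (Quotient (MulAction.orbitRel Γ X))) := by
    intro p _
    obtain ⟨x, rfl⟩ := Quotient.exists_rep p
    obtain ⟨m, hm⟩ := exists_nat_gt ‖x‖
    exact Set.mem_iUnion.mpr ⟨m, x, by simpa [mem_ball_zero_iff] using hm, rfl⟩
  obtain ⟨t, ht⟩ := isCompact_univ.elim_finite_subcover
    (fun m : ℕ => (Quotient.mk' '' (Metric.ball (0 : X) m) :
      Set (Quotient (MulAction.orbitRel Γ X))))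
    (fun m => isOpenMap_quotient_mk'_mul _ Metric.isOpen_ball) hcover
  refine ⟨(t.sup id : ℕ), fun x => ?_⟩
  have hx : (Quotient.mk' x : Quotient (MulAction.orbitRel Γ X))
      ∈ ⋃ m ∈ t, Quotient.mk' '' (Metric.ball (0 : X) m) := ht (Set.mem_univ _)
  obtain ⟨m, hmt, y, hy, hyx⟩ := by simpa using hx
  obtain ⟨δ, hδ⟩ := hyx
  refine ⟨δ, ?_⟩
  have hδ' : (δ : EuclideanGrp n) • x = y := hδ
  rw [hδ']
  have : ‖y‖ < (m : ℝ) := hy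
  have hm' : (m : ℝ) ≤ ((t.sup id : ℕ) : ℝ) := by
    exact_mod_cast Finset.le_sup (f := id) hmt
  linarith

lemma compact_coset_of_compact_orbit (Γ : Subgroup (EuclideanGrp n))
    (hc : CompactSpace (Quotient (MulAction.orbitRel Γ (EuclideanSpace ℝ (Fin n))))) :
    CompactSpace (EuclideanGrp n ⧸ Γ) := by
  obtain ⟨R, hR⟩ := exists_bound_orbit Γ hc
  rw [← isCompact_univ_iff]
  have himg : (Set.univ : Set (EuclideanGrp n ⧸ Γ))
      = QuotientGroup.mk '' {g : EuclideanGrp n | ‖g.a‖ ≤ R} := by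
    refine Set.eq_of_subset_of_subset ?_ (Set.subset_univ _)
    intro p _
    obtain ⟨g, rfl⟩ := Quotient.exists_rep p
    obtain ⟨γ, hγ⟩ := hR (g⁻¹ • (0 : EuclideanSpace ℝ (Fin n)))
    set h := g * (γ : EuclideanGrp n)⁻¹ with hh
    have h1 : h⁻¹ • (0 : EuclideanSpace ℝ (Fin n))
        = (γ : EuclideanGrp n) • (g⁻¹ • (0 : EuclideanSpace ℝ (Fin n))) := by
      rw [hh, mul_inv_rev, inv_inv, mul_smul]
    have h2 : ‖h.a‖ ≤ R := by
      rw [← norm_inv_smul_zero, h1]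
      exact hγ
    refine ⟨h, h2, ?_⟩
    show QuotientGroup.mk h = Quotient.mk _ g
    have : QuotientGroup.mk (s := Γ) g = QuotientGroup.mk h := by
      rw [QuotientGroup.eq]
      simp [hh]
    exact this.symm
  rw [himg]
  exact (isCompact_normA_le R).image continuous_quotient_mk'

lemma compact_orbit_of_compact_coset (Γ : Subgroup (EuclideanGrp n))
    (hc : CompactSpace (EuclideanGrp n ⧸ Γ)) :
    CompactSpace (Quotient (MulAction.orbitRel Γ (EuclideanSpace ℝ (Fin n)))) := by
  set X := EuclideanSpace ℝ (Fin n)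
  letI := MulAction.orbitRel Γ X
  set f : EuclideanGrp n → Quotient (MulAction.orbitRel Γ X) :=
    fun g => Quotient.mk' (g⁻¹ • (0 : X)) with hf
  have hwd : ∀ a b : EuclideanGrp n, (QuotientGroup.leftRel Γ).r a b → f a = f b := by
    intro a b hab
    rw [QuotientGroup.leftRel_apply] at hab
    apply Quotient.sound'
    show a⁻¹ • (0 : X) ∈ MulAction.orbit Γ (b⁻¹ • (0 : X))
    refine ⟨⟨a⁻¹ * b, hab⟩, ?_⟩
    show (a⁻¹ * b) • (b⁻¹ • (0 : X)) = a⁻¹ • (0 : X)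
    rw [← mul_smul]
    congr 1
    group
  have hcont : Continuous f := by
    apply Continuous.comp continuous_quotient_mk'
    exact Continuous.smul continuous_inv continuous_const
  set φ : EuclideanGrp n ⧸ Γ → Quotient (MulAction.orbitRel Γ X) :=
    Quotient.lift f hwd with hφ
  have hφcont : Continuous φ := hcont.quotient_lift hwd
  have hsurj : Function.Surjective φ := by
    intro p
    obtain ⟨x, rfl⟩ := Quotient.exists_rep p
    refine ⟨QuotientGroup.mk ((⟨1, x⟩ : EuclideanGrp n)⁻¹), ?_⟩
    have h0 : ((⟨1, x⟩ : EuclideanGrp n)⁻¹)⁻¹ • (0 : X) = x := by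
      rw [inv_inv]
      show mapp ((1 : Matrix.orthogonalGroup (Fin n) ℝ) : Matrix (Fin n) (Fin n) ℝ) 0 + x = x
      rw [mapp_zero, zero_add]
    show Quotient.mk' (((⟨1, x⟩ : EuclideanGrp n)⁻¹)⁻¹ • (0 : X)) = _
    rw [h0]
    rfl
  rw [← isCompact_univ_iff]
  have : (Set.univ : Set (Quotient (MulAction.orbitRel Γ X))) = φ '' Set.univ := by
    rw [Set.image_univ, Set.range_eq_univ.mpr hsurj]
  rw [this]
  exact isCompact_univ.image hφcont

end EuclideanGrp

/-- A subgroup `Γ` of the Euclidean group `E(n)` acts properly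
discontinuously on `ℝⁿ` with compact orbit space `ℝⁿ/Γ` if and only if `Γ` is a
discrete uniform subgroup of `E(n)` (discrete, with compact coset space `E(n)/Γ`). -/
theorem properlyDiscontinuous_compactQuotient_iff_discrete_uniform
    (n : ℕ) (Γ : Subgroup (EuclideanGrp n)) :
    ((∀ K L : Set (EuclideanSpace ℝ (Fin n)), IsCompact K → IsCompact L →
        {γ : EuclideanGrp n | γ ∈ Γ ∧ ((fun x => γ • x) '' K ∩ L).Nonempty}.Finite) ∧
      CompactSpace (Quotient (MulAction.orbitRel Γ (EuclideanSpace ℝ (Fin n)))))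
      ↔ (DiscreteTopology Γ ∧ CompactSpace (EuclideanGrp n ⧸ Γ)) := by
  constructor
  · rintro ⟨hpd, horb⟩
    exact ⟨EuclideanGrp.discrete_of_finite Γ hpd,
      EuclideanGrp.compact_coset_of_compact_orbit Γ horb⟩
  · rintro ⟨hd, hcos⟩
    exact ⟨fun K L hK hL => EuclideanGrp.finite_of_discrete Γ hd K L hK hL,
      EuclideanGrp.compact_orbit_of_compact_coset Γ hcos⟩
end

section
/- For every t > 0 and every x, x₀ ∈ ℝⁿ the series ρ_t^{x₀}(x) = (1/V) Σ_{k∈ℤⁿ} exp(i K(k)·(x − x₀) − ‖K(k)‖² t/2) converges absolutely, and the resulting function satisfies the heat equation ∂ρ_t^{x₀}(x)/∂t = (1/2) Δρ_t^{x₀}(x), where Δ is the Laplacian in the variable x. -/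
open Real

lemma my_mul_exp_neg_le_one {y : ℝ} (hy : 0 ≤ y) : y * Real.exp (-y) ≤ 1 := by
  rw [Real.exp_neg]
  calc y * (Real.exp y)⁻¹ ≤ Real.exp y * (Real.exp y)⁻¹ := by
        apply mul_le_mul_of_nonneg_right _ (by positivity)
        nlinarith [Real.add_one_le_exp y]
    _ = 1 := mul_inv_cancel₀ (Real.exp_pos y).ne'

lemma my_gauss_nat_summable {a : ℝ} (ha : 0 < a) :
    Summable fun m : ℕ => Real.exp (-(a * (m : ℝ) ^ 2)) := by
  have hgeom : Summable fun m : ℕ => Real.exp (-a) ^ m :=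
    summable_geometric_of_lt_one (Real.exp_pos _).le
      (by simpa using Real.exp_lt_exp.2 (neg_lt_zero.2 ha))
  refine Summable.of_nonneg_of_le (fun m => (Real.exp_pos _).le) (fun m => ?_) hgeom
  rw [← Real.exp_nat_mul]
  apply Real.exp_le_exp.2
  have h : (m : ℝ) ≤ (m : ℝ) ^ 2 := by
    have := Nat.le_self_pow (two_ne_zero) m
    exact_mod_cast this
  nlinarith

lemma my_gauss_int_summable {a : ℝ} (ha : 0 < a) :
    Summable fun m : ℤ => Real.exp (-(a * (m : ℝ) ^ 2)) := by
  apply Summable.of_nat_of_neg <;> simpa using my_gauss_nat_summable ha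

lemma my_gauss_pi_summable {a : ℝ} (ha : 0 < a) (n : ℕ) :
    Summable fun k : Fin n → ℤ => Real.exp (-(a * ∑ i, ((k i : ℝ)) ^ 2)) := by
  induction n with
  | zero => exact .of_finite
  | succ m ih =>
    rw [← (Fin.consEquiv (fun _ : Fin (m + 1) => ℤ)).summable_iff]
    have : ((fun k : Fin (m + 1) → ℤ => Real.exp (-(a * ∑ i, ((k i : ℝ)) ^ 2))) ∘
        (Fin.consEquiv (fun _ : Fin (m + 1) => ℤ)))
        = fun p : ℤ × (Fin m → ℤ) =>
          Real.exp (-(a * (p.1 : ℝ) ^ 2)) * Real.exp (-(a * ∑ i, ((p.2 i : ℝ)) ^ 2)) := by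
      funext p
      simp only [Function.comp, Fin.consEquiv_apply]
      rw [← Real.exp_add]
      congr 1
      rw [Fin.sum_univ_succ]
      simp only [Fin.cons_zero, Fin.cons_succ]
      ring
    rw [this]
    exact (my_gauss_int_summable ha).mul_of_nonneg ih (fun _ => (Real.exp_pos _).le)
      (fun _ => (Real.exp_pos _).le)

/-- derivative of `r ↦ exp (A + w r)` (real variable, complex values). -/
lemma my_hasDerivAt_exp_affine (A w : ℂ) (y : ℝ) :
    HasDerivAt (fun r : ℝ => Complex.exp (A + w * r)) (w * Complex.exp (A + w * y)) y := by
  have h2 : HasDerivAt (fun z : ℂ => A + w * z) w (y : ℂ) := by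
    simpa using ((hasDerivAt_id (y : ℂ)).const_mul w).const_add A
  have h1 := (Complex.hasDerivAt_exp (A + w * (y : ℂ))).comp (y : ℂ) h2
  simpa [Function.comp, mul_comm] using h1.comp_ofReal

lemma my_norm_exp (z : ℂ) : ‖Complex.exp z‖ = Real.exp z.re := by
  rw [Complex.norm_exp]

/-- For a basis `b = B` of `ℝⁿ` with dual basis `b* = Bstar`
(`⟨bᵢ, bⱼ*⟩ = δᵢⱼ`), reciprocal lattice vectors `K(k) = 2π Σᵢ kᵢ bᵢ*` and cell volume
`V = |det(b₁,…,bₙ)|`, the series `ρ_t^{x₀}(x) = (1/V) Σ_{k∈ℤⁿ} exp(i K(k)·(x−x₀) − ‖K(k)‖²t/2)`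
converges absolutely for every `t > 0`, and the resulting function satisfies the heat
equation `∂ρ/∂t = (1/2) Δρ` in the variable `x`. -/
theorem lattice_heatKernel_summable_and_heatEquation (n : ℕ)
    (B : Module.Basis (Fin n) ℝ (EuclideanSpace ℝ (Fin n)))
    (Bstar : Fin n → EuclideanSpace ℝ (Fin n))
    (hdual : ∀ i j, (inner ℝ (B i) (Bstar j) : ℝ) = if i = j then 1 else 0)
    (x₀ : EuclideanSpace ℝ (Fin n)) :
    let K : (Fin n → ℤ) → EuclideanSpace ℝ (Fin n) :=
      fun k => (2 * π) • ∑ i, (k i : ℝ) • Bstar i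
    let V : ℝ := |(Matrix.of fun i j => B j i).det|
    let ρ : ℝ → EuclideanSpace ℝ (Fin n) → ℂ := fun t x =>
      (1 / (V : ℂ)) * ∑' k : Fin n → ℤ,
        Complex.exp (Complex.I * ((inner ℝ (K k) (x - x₀) : ℝ) : ℂ) - ((‖K k‖ ^ 2 * t / 2 : ℝ) : ℂ))
    ∀ t > 0, ∀ x : EuclideanSpace ℝ (Fin n),
      (Summable fun k : Fin n → ℤ =>
        ‖Complex.exp (Complex.I * ((inner ℝ (K k) (x - x₀) : ℝ) : ℂ) - ((‖K k‖ ^ 2 * t / 2 : ℝ) : ℂ))‖) ∧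
      deriv (fun s : ℝ => ρ s x) t
        = (1 / 2) * ∑ i : Fin n,
            deriv (deriv (fun r : ℝ => ρ t (x + r • EuclideanSpace.single i (1 : ℝ)))) 0 := by
  intro K V ρ t ht x
  have hK : ∀ k, K k = (2 * π) • ∑ i, (k i : ℝ) • Bstar i := fun _ => rfl
  -- inner product of basis vectors with lattice vectors
  have hinnerB : ∀ (k : Fin n → ℤ) (i : Fin n), (inner ℝ (B i) (K k) : ℝ) = 2 * π * (k i) := by
    intro k i
    rw [hK, real_inner_smul_right, inner_sum]
    simp only [real_inner_smul_right, hdual, mul_ite, mul_one, mul_zero]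
    simp
  -- the quadratic comparison constant
  set C : ℝ := (∑ i, ‖B i‖ ^ 2) / (2 * π) ^ 2 + 1 with hC
  have hCpos : 0 < C := by positivity
  have hbound : ∀ k : Fin n → ℤ, ∑ i, ((k i : ℝ)) ^ 2 ≤ C * ‖K k‖ ^ 2 := by
    intro k
    have h1 : ∀ i, (2 * π) ^ 2 * ((k i : ℝ)) ^ 2 ≤ ‖B i‖ ^ 2 * ‖K k‖ ^ 2 := by
      intro i
      have h2 := abs_real_inner_le_norm (B i) (K k)
      rw [hinnerB k i] at h2
      have h3 : (2 * π * (k i : ℝ)) ^ 2 ≤ (‖B i‖ * ‖K k‖) ^ 2 := by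
        rw [← sq_abs]
        exact pow_le_pow_left₀ (abs_nonneg _) h2 2
      nlinarith
    have h4 : (2 * π) ^ 2 * ∑ i, ((k i : ℝ)) ^ 2 ≤ (∑ i, ‖B i‖ ^ 2) * ‖K k‖ ^ 2 := by
      rw [Finset.mul_sum, Finset.sum_mul]
      exact Finset.sum_le_sum fun i _ => h1 i
    have hpi : (0 : ℝ) < (2 * π) ^ 2 := by positivity
    rw [hC]
    rw [div_add' _ _ _ hpi.ne', div_mul_eq_mul_div, le_div_iff₀ hpi]
    nlinarith [sq_nonneg ‖K k‖]
  -- master summability lemma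
  have Hsum : ∀ b : ℝ, 0 < b → Summable fun k : Fin n → ℤ => Real.exp (-(‖K k‖ ^ 2 * b)) := by
    intro b hb
    refine Summable.of_nonneg_of_le (fun k => (Real.exp_pos _).le) (fun k => ?_)
      (my_gauss_pi_summable (a := b / C) (by positivity) n)
    apply Real.exp_le_exp.2
    rw [neg_le_neg_iff]
    have := hbound k
    rw [div_mul_eq_mul_div, div_le_iff₀ hCpos]
    nlinarith
  -- squared version
  have Hsum2 : ∀ b : ℝ, 0 < b →
      Summable fun k : Fin n → ℤ => ‖K k‖ ^ 2 * Real.exp (-(‖K k‖ ^ 2 * b)) := by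
    intro b hb
    refine Summable.of_nonneg_of_le (fun k => by positivity) (fun k => ?_)
      ((Hsum (b / 2) (by positivity)).mul_left (2 / b))
    have h1 : (‖K k‖ ^ 2 * (b / 2)) * Real.exp (-(‖K k‖ ^ 2 * (b / 2))) ≤ 1 :=
      my_mul_exp_neg_le_one (by positivity)
    have h2 : Real.exp (-(‖K k‖ ^ 2 * b))
        = Real.exp (-(‖K k‖ ^ 2 * (b / 2))) * Real.exp (-(‖K k‖ ^ 2 * (b / 2))) := by
      rw [← Real.exp_add]; ring_nf
    rw [h2]
    have hE := Real.exp_pos (-(‖K k‖ ^ 2 * (b / 2)))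
    set E := Real.exp (-(‖K k‖ ^ 2 * (b / 2))) with hEdef
    calc ‖K k‖ ^ 2 * (E * E) = (2 / b) * ((‖K k‖ ^ 2 * (b / 2)) * E * E) := by
          field_simp
      _ ≤ (2 / b) * (1 * E) := by
          apply mul_le_mul_of_nonneg_left _ (by positivity)
          nlinarith [mul_le_mul_of_nonneg_right h1 hE.le]
      _ = (2 / b) * E := by ring
  -- linear version
  have Hsum1 : ∀ b : ℝ, 0 < b →
      Summable fun k : Fin n → ℤ => ‖K k‖ * Real.exp (-(‖K k‖ ^ 2 * b)) := by
    intro b hb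
    refine Summable.of_nonneg_of_le (fun k => by positivity) (fun k => ?_)
      ((Hsum b hb).add (Hsum2 b hb))
    have hE := Real.exp_pos (-(‖K k‖ ^ 2 * b))
    nlinarith [sq_nonneg (‖K k‖ - 1)]
  -- coordinate bound
  have habs : ∀ (k : Fin n → ℤ) (i : Fin n), |(K k) i| ≤ ‖K k‖ := by
    intro k i
    have h := abs_real_inner_le_norm (K k) (EuclideanSpace.single i (1 : ℝ))
    simpa [EuclideanSpace.inner_single_right] using h
  -- squared norm as coordinate sum
  have hnormsq : ∀ k : Fin n → ℤ, ∑ i, ((K k) i) ^ 2 = ‖K k‖ ^ 2 := by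
    intro k
    rw [EuclideanSpace.norm_eq, Real.sq_sqrt (by positivity)]
    exact Finset.sum_congr rfl fun i _ => by rw [Real.norm_eq_abs, sq_abs]
  -- real parts
  have hre : ∀ (θ b : ℝ), (Complex.I * (θ : ℂ) - ((b : ℝ) : ℂ)).re = -b := by
    intro θ b
    simp only [Complex.sub_re, Complex.mul_re, Complex.I_re, Complex.I_im, Complex.ofReal_re,
      Complex.ofReal_im]
    ring
  have hre2 : ∀ (θ b d y : ℝ),
      ((Complex.I * (θ : ℂ) - ((b : ℝ) : ℂ)) + (Complex.I * ((d : ℝ) : ℂ)) * ((y : ℝ) : ℂ)).re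
        = -b := by
    intro θ b d y
    simp only [Complex.add_re, Complex.sub_re, Complex.mul_re, Complex.mul_im, Complex.I_re,
      Complex.I_im, Complex.ofReal_re, Complex.ofReal_im]
    ring
  have hre3 : ∀ (θ c y : ℝ),
      ((Complex.I * (θ : ℂ)) + ((c : ℝ) : ℂ) * ((y : ℝ) : ℂ)).re = c * y := by
    intro θ c y
    simp only [Complex.add_re, Complex.mul_re, Complex.I_re, Complex.I_im, Complex.ofReal_re,
      Complex.ofReal_im]
    ring
  -- first conjunct
  have S1 : Summable fun k : Fin n → ℤ =>
      ‖Complex.exp (Complex.I * ((inner ℝ (K k) (x - x₀) : ℝ) : ℂ)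
        - ((‖K k‖ ^ 2 * t / 2 : ℝ) : ℂ))‖ := by
    have heq : ∀ k : Fin n → ℤ,
        ‖Complex.exp (Complex.I * ((inner ℝ (K k) (x - x₀) : ℝ) : ℂ)
          - ((‖K k‖ ^ 2 * t / 2 : ℝ) : ℂ))‖ = Real.exp (-(‖K k‖ ^ 2 * (t / 2))) := by
      intro k
      rw [my_norm_exp, hre]
      congr 1
      ring
    exact ((Hsum (t / 2) (by positivity)).congr fun k => (heq k).symm)
  refine ⟨S1, ?_⟩
  -- affine rewriting in the t-variable
  have hfunt : ∀ k : Fin n → ℤ, (fun s : ℝ =>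
      Complex.exp (Complex.I * ((inner ℝ (K k) (x - x₀) : ℝ) : ℂ) - ((‖K k‖ ^ 2 * s / 2 : ℝ) : ℂ)))
      = fun s : ℝ => Complex.exp (Complex.I * ((inner ℝ (K k) (x - x₀) : ℝ) : ℂ)
        + ((-(‖K k‖ ^ 2 / 2) : ℝ) : ℂ) * (s : ℂ)) := by
    intro k; funext s; congr 1; push_cast; ring
  -- derivative of the series in t
  have hT : HasDerivAt (fun s : ℝ => ∑' k : Fin n → ℤ,
        Complex.exp (Complex.I * ((inner ℝ (K k) (x - x₀) : ℝ) : ℂ)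
          + ((-(‖K k‖ ^ 2 / 2) : ℝ) : ℂ) * (s : ℂ)))
      (∑' k : Fin n → ℤ, ((-(‖K k‖ ^ 2 / 2) : ℝ) : ℂ) *
        Complex.exp (Complex.I * ((inner ℝ (K k) (x - x₀) : ℝ) : ℂ)
          + ((-(‖K k‖ ^ 2 / 2) : ℝ) : ℂ) * (t : ℂ))) t := by
    have hu : Summable fun k : Fin n → ℤ => ‖K k‖ ^ 2 / 2 * Real.exp (-(‖K k‖ ^ 2 * (t / 4))) :=
      ((Hsum2 (t / 4) (by positivity)).mul_left (1 / 2)).congr fun k => by ring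
    refine hasDerivAt_tsum_of_isPreconnected hu isOpen_Ioi isPreconnected_Ioi
      (fun k y _ => my_hasDerivAt_exp_affine _ _ y) (fun k y hy => ?_)
      (show t ∈ Set.Ioi (t / 2) by simp only [Set.mem_Ioi]; linarith) ?_
      (show t ∈ Set.Ioi (t / 2) by simp only [Set.mem_Ioi]; linarith)
    · rw [Set.mem_Ioi] at hy
      rw [norm_mul, my_norm_exp, hre3, Complex.norm_real, Real.norm_eq_abs, abs_neg,
        abs_of_nonneg (by positivity : (0:ℝ) ≤ ‖K k‖ ^ 2 / 2)]
      apply mul_le_mul_of_nonneg_left _ (by positivity)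
      apply Real.exp_le_exp.2
      nlinarith [sq_nonneg ‖K k‖]
    · refine Summable.of_norm (((Hsum (t / 2) (by positivity)).congr fun k => ?_))
      rw [my_norm_exp, hre3]
      congr 1
      ring
  -- the left-hand side
  have hL : deriv (fun s : ℝ => (1 / (V : ℂ)) * ∑' k : Fin n → ℤ,
        Complex.exp (Complex.I * ((inner ℝ (K k) (x - x₀) : ℝ) : ℂ) - ((‖K k‖ ^ 2 * s / 2 : ℝ) : ℂ))) t
      = (1 / (V : ℂ)) * ∑' k : Fin n → ℤ, ((-(‖K k‖ ^ 2 / 2) : ℝ) : ℂ) *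
          Complex.exp (Complex.I * ((inner ℝ (K k) (x - x₀) : ℝ) : ℂ)
            - ((‖K k‖ ^ 2 * t / 2 : ℝ) : ℂ)) := by
    have h1 : (fun s : ℝ => (1 / (V : ℂ)) * ∑' k : Fin n → ℤ,
        Complex.exp (Complex.I * ((inner ℝ (K k) (x - x₀) : ℝ) : ℂ) - ((‖K k‖ ^ 2 * s / 2 : ℝ) : ℂ)))
        = fun s : ℝ => (1 / (V : ℂ)) * ∑' k : Fin n → ℤ,
          Complex.exp (Complex.I * ((inner ℝ (K k) (x - x₀) : ℝ) : ℂ)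
            + ((-(‖K k‖ ^ 2 / 2) : ℝ) : ℂ) * (s : ℂ)) := by
      funext s; congr 1; exact tsum_congr fun k => congrFun (hfunt k) s
    rw [h1, (hT.const_mul (1 / (V : ℂ))).deriv]
    congr 1
    refine tsum_congr fun k => ?_
    congr 2
    push_cast
    ring
  -- inner product expansion in the x-direction
  have hinner2 : ∀ (i : Fin n) (k : Fin n → ℤ) (r : ℝ),
      (inner ℝ (K k) (x + r • EuclideanSpace.single i (1 : ℝ) - x₀) : ℝ)
        = (inner ℝ (K k) (x - x₀) : ℝ) + r * (K k) i := by
    intro i k r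
    have hsplit : x + r • EuclideanSpace.single i (1 : ℝ) - x₀
        = (x - x₀) + r • EuclideanSpace.single i (1 : ℝ) := add_sub_right_comm x _ x₀
    rw [hsplit, inner_add_right, real_inner_smul_right]
    congr 1
    have := EuclideanSpace.inner_single_right (𝕜 := ℝ) i (1 : ℝ) (K k)
    simp only [map_one, one_mul, starRingEnd_apply, star_trivial] at this
    rw [this]
  -- affine rewriting in the x-direction
  have hfunx : ∀ (i : Fin n) (k : Fin n → ℤ), (fun r : ℝ =>
      Complex.exp (Complex.I * ((inner ℝ (K k) (x + r • EuclideanSpace.single i (1 : ℝ) - x₀) : ℝ) : ℂ)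
        - ((‖K k‖ ^ 2 * t / 2 : ℝ) : ℂ)))
      = fun r : ℝ => Complex.exp ((Complex.I * ((inner ℝ (K k) (x - x₀) : ℝ) : ℂ)
          - ((‖K k‖ ^ 2 * t / 2 : ℝ) : ℂ)) + (Complex.I * (((K k) i : ℝ) : ℂ)) * (r : ℂ)) := by
    intro i k; funext r; congr 1; rw [hinner2 i k r]; push_cast; ring
  -- summability of the zero-order terms
  have hg0x : ∀ i : Fin n, Summable fun k : Fin n → ℤ =>
      Complex.exp ((Complex.I * ((inner ℝ (K k) (x - x₀) : ℝ) : ℂ) - ((‖K k‖ ^ 2 * t / 2 : ℝ) : ℂ))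
        + (Complex.I * (((K k) i : ℝ) : ℂ)) * ((0 : ℝ) : ℂ)) := by
    intro i
    refine Summable.of_norm ((Hsum (t / 2) (by positivity)).congr fun k => ?_)
    rw [my_norm_exp, hre2]
    congr 1
    ring
  -- first x-derivative
  have hD1 : ∀ i : Fin n, deriv (fun r : ℝ => (1 / (V : ℂ)) * ∑' k : Fin n → ℤ,
        Complex.exp ((Complex.I * ((inner ℝ (K k) (x - x₀) : ℝ) : ℂ) - ((‖K k‖ ^ 2 * t / 2 : ℝ) : ℂ))
          + (Complex.I * (((K k) i : ℝ) : ℂ)) * (r : ℂ)))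
      = fun y : ℝ => (1 / (V : ℂ)) * ∑' k : Fin n → ℤ, (Complex.I * (((K k) i : ℝ) : ℂ)) *
          Complex.exp ((Complex.I * ((inner ℝ (K k) (x - x₀) : ℝ) : ℂ) - ((‖K k‖ ^ 2 * t / 2 : ℝ) : ℂ))
            + (Complex.I * (((K k) i : ℝ) : ℂ)) * (y : ℂ)) := by
    intro i
    funext y
    have hT1 : HasDerivAt (fun r : ℝ => ∑' k : Fin n → ℤ,
        Complex.exp ((Complex.I * ((inner ℝ (K k) (x - x₀) : ℝ) : ℂ) - ((‖K k‖ ^ 2 * t / 2 : ℝ) : ℂ))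
          + (Complex.I * (((K k) i : ℝ) : ℂ)) * (r : ℂ)))
        (∑' k : Fin n → ℤ, (Complex.I * (((K k) i : ℝ) : ℂ)) *
          Complex.exp ((Complex.I * ((inner ℝ (K k) (x - x₀) : ℝ) : ℂ) - ((‖K k‖ ^ 2 * t / 2 : ℝ) : ℂ))
            + (Complex.I * (((K k) i : ℝ) : ℂ)) * (y : ℂ))) y := by
      refine hasDerivAt_tsum (u := fun k => ‖K k‖ * Real.exp (-(‖K k‖ ^ 2 * (t / 2))))
        (Hsum1 (t / 2) (by positivity)) (fun k z => my_hasDerivAt_exp_affine _ _ z)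
        (fun k z => ?_) (hg0x i) y
      rw [norm_mul, my_norm_exp, hre2, norm_mul, Complex.norm_I, one_mul, Complex.norm_real,
        Real.norm_eq_abs]
      have h1 : Real.exp (-(‖K k‖ ^ 2 * t / 2)) = Real.exp (-(‖K k‖ ^ 2 * (t / 2))) := by
        congr 1; ring
      rw [h1]
      exact mul_le_mul_of_nonneg_right (habs k i) (Real.exp_pos _).le
    exact (hT1.const_mul (1 / (V : ℂ))).deriv
  -- second x-derivative at 0
  have hD2 : ∀ i : Fin n, deriv (fun y : ℝ => (1 / (V : ℂ)) * ∑' k : Fin n → ℤ,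
        (Complex.I * (((K k) i : ℝ) : ℂ)) *
          Complex.exp ((Complex.I * ((inner ℝ (K k) (x - x₀) : ℝ) : ℂ) - ((‖K k‖ ^ 2 * t / 2 : ℝ) : ℂ))
            + (Complex.I * (((K k) i : ℝ) : ℂ)) * (y : ℂ))) 0
      = (1 / (V : ℂ)) * ∑' k : Fin n → ℤ, (Complex.I * (((K k) i : ℝ) : ℂ)) *
          ((Complex.I * (((K k) i : ℝ) : ℂ)) *
          Complex.exp ((Complex.I * ((inner ℝ (K k) (x - x₀) : ℝ) : ℂ) - ((‖K k‖ ^ 2 * t / 2 : ℝ) : ℂ))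
            + (Complex.I * (((K k) i : ℝ) : ℂ)) * ((0 : ℝ) : ℂ))) := by
    intro i
    have hT2 : HasDerivAt (fun y : ℝ => ∑' k : Fin n → ℤ,
        (Complex.I * (((K k) i : ℝ) : ℂ)) *
          Complex.exp ((Complex.I * ((inner ℝ (K k) (x - x₀) : ℝ) : ℂ) - ((‖K k‖ ^ 2 * t / 2 : ℝ) : ℂ))
            + (Complex.I * (((K k) i : ℝ) : ℂ)) * (y : ℂ)))
        (∑' k : Fin n → ℤ, (Complex.I * (((K k) i : ℝ) : ℂ)) *
          ((Complex.I * (((K k) i : ℝ) : ℂ)) *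
          Complex.exp ((Complex.I * ((inner ℝ (K k) (x - x₀) : ℝ) : ℂ) - ((‖K k‖ ^ 2 * t / 2 : ℝ) : ℂ))
            + (Complex.I * (((K k) i : ℝ) : ℂ)) * ((0 : ℝ) : ℂ)))) 0 := by
      refine hasDerivAt_tsum (y₀ := (0 : ℝ))
        (u := fun k => ‖K k‖ ^ 2 * Real.exp (-(‖K k‖ ^ 2 * (t / 2))))
        (Hsum2 (t / 2) (by positivity))
        (fun k z => (my_hasDerivAt_exp_affine _ _ z).const_mul _) (fun k z => ?_) ?_ 0
      · simp only [norm_mul, my_norm_exp, hre2, Complex.norm_I, one_mul, Complex.norm_real,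
          Real.norm_eq_abs]
        have h1 : Real.exp (-(‖K k‖ ^ 2 * t / 2)) = Real.exp (-(‖K k‖ ^ 2 * (t / 2))) := by
          congr 1; ring
        rw [h1, ← mul_assoc]
        apply mul_le_mul_of_nonneg_right _ (Real.exp_pos _).le
        have := habs k i
        nlinarith [abs_nonneg ((K k) i), norm_nonneg (K k)]
      · refine Summable.of_norm (Summable.of_nonneg_of_le (fun k => norm_nonneg _)
          (fun k => ?_) (Hsum1 (t / 2) (by positivity)))
        rw [norm_mul, my_norm_exp, hre2, norm_mul, Complex.norm_I, one_mul, Complex.norm_real,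
          Real.norm_eq_abs]
        have h1 : Real.exp (-(‖K k‖ ^ 2 * t / 2)) = Real.exp (-(‖K k‖ ^ 2 * (t / 2))) := by
          congr 1; ring
        rw [h1]
        exact mul_le_mul_of_nonneg_right (habs k i) (Real.exp_pos _).le
    exact (hT2.const_mul (1 / (V : ℂ))).deriv
  -- assemble
  show deriv (fun s : ℝ => (1 / (V : ℂ)) * ∑' k : Fin n → ℤ,
        Complex.exp (Complex.I * ((inner ℝ (K k) (x - x₀) : ℝ) : ℂ) - ((‖K k‖ ^ 2 * s / 2 : ℝ) : ℂ))) t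
      = (1 / 2) * ∑ i : Fin n, deriv (deriv (fun r : ℝ => (1 / (V : ℂ)) * ∑' k : Fin n → ℤ,
          Complex.exp (Complex.I *
            ((inner ℝ (K k) (x + r • EuclideanSpace.single i (1 : ℝ) - x₀) : ℝ) : ℂ)
            - ((‖K k‖ ^ 2 * t / 2 : ℝ) : ℂ)))) 0
  have hRi : ∀ i : Fin n, deriv (deriv (fun r : ℝ => (1 / (V : ℂ)) * ∑' k : Fin n → ℤ,
        Complex.exp (Complex.I *
          ((inner ℝ (K k) (x + r • EuclideanSpace.single i (1 : ℝ) - x₀) : ℝ) : ℂ)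
          - ((‖K k‖ ^ 2 * t / 2 : ℝ) : ℂ)))) 0
      = (1 / (V : ℂ)) * ∑' k : Fin n → ℤ, (Complex.I * (((K k) i : ℝ) : ℂ)) *
          ((Complex.I * (((K k) i : ℝ) : ℂ)) *
          Complex.exp ((Complex.I * ((inner ℝ (K k) (x - x₀) : ℝ) : ℂ) - ((‖K k‖ ^ 2 * t / 2 : ℝ) : ℂ))
            + (Complex.I * (((K k) i : ℝ) : ℂ)) * ((0 : ℝ) : ℂ))) := by
    intro i
    have h1 : (fun r : ℝ => (1 / (V : ℂ)) * ∑' k : Fin n → ℤ,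
        Complex.exp (Complex.I *
          ((inner ℝ (K k) (x + r • EuclideanSpace.single i (1 : ℝ) - x₀) : ℝ) : ℂ)
          - ((‖K k‖ ^ 2 * t / 2 : ℝ) : ℂ)))
        = fun r : ℝ => (1 / (V : ℂ)) * ∑' k : Fin n → ℤ,
          Complex.exp ((Complex.I * ((inner ℝ (K k) (x - x₀) : ℝ) : ℂ)
            - ((‖K k‖ ^ 2 * t / 2 : ℝ) : ℂ)) + (Complex.I * (((K k) i : ℝ) : ℂ)) * (r : ℂ)) := by
      funext r; congr 1; exact tsum_congr fun k => congrFun (hfunx i k) r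
    rw [h1, hD1 i, hD2 i]
  rw [hL]
  simp only [hRi]
  have hsumm_i : ∀ i ∈ Finset.univ (α := Fin n), Summable fun k : Fin n → ℤ =>
      (Complex.I * (((K k) i : ℝ) : ℂ)) * ((Complex.I * (((K k) i : ℝ) : ℂ)) *
        Complex.exp ((Complex.I * ((inner ℝ (K k) (x - x₀) : ℝ) : ℂ) - ((‖K k‖ ^ 2 * t / 2 : ℝ) : ℂ))
          + (Complex.I * (((K k) i : ℝ) : ℂ)) * ((0 : ℝ) : ℂ))) := by
    intro i _
    refine Summable.of_norm (Summable.of_nonneg_of_le (fun k => norm_nonneg _)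
      (fun k => ?_) (Hsum2 (t / 2) (by positivity)))
    simp only [norm_mul, my_norm_exp, hre2, Complex.norm_I, one_mul, Complex.norm_real,
      Real.norm_eq_abs]
    have h1 : Real.exp (-(‖K k‖ ^ 2 * t / 2)) = Real.exp (-(‖K k‖ ^ 2 * (t / 2))) := by
      congr 1; ring
    rw [h1, ← mul_assoc]
    apply mul_le_mul_of_nonneg_right _ (Real.exp_pos _).le
    have := habs k i
    nlinarith [abs_nonneg ((K k) i), norm_nonneg (K k)]
  rw [← Finset.mul_sum, ← Summable.tsum_finsetSum hsumm_i]
  rw [show ∀ S : ℂ, (1 / 2 : ℂ) * ((1 / (V : ℂ)) * S) = (1 / (V : ℂ)) * ((1 / 2) * S) from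
    fun S => by ring]
  refine congrArg (fun z : ℂ => (1 / (V : ℂ)) * z) ?_
  rw [← tsum_mul_left]
  refine tsum_congr fun k => ?_
  have h2 : ∀ i : Fin n, (Complex.I * (((K k) i : ℝ) : ℂ)) * ((Complex.I * (((K k) i : ℝ) : ℂ)) *
      Complex.exp ((Complex.I * ((inner ℝ (K k) (x - x₀) : ℝ) : ℂ) - ((‖K k‖ ^ 2 * t / 2 : ℝ) : ℂ))
        + (Complex.I * (((K k) i : ℝ) : ℂ)) * ((0 : ℝ) : ℂ)))
      = -(((((K k) i) ^ 2 : ℝ) : ℂ)) *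
        Complex.exp (Complex.I * ((inner ℝ (K k) (x - x₀) : ℝ) : ℂ)
          - ((‖K k‖ ^ 2 * t / 2 : ℝ) : ℂ)) := by
    intro i
    rw [show ((0 : ℝ) : ℂ) = 0 from rfl, mul_zero, add_zero]
    rw [show (Complex.I * (((K k) i : ℝ) : ℂ)) * ((Complex.I * (((K k) i : ℝ) : ℂ)) *
        Complex.exp (Complex.I * ((inner ℝ (K k) (x - x₀) : ℝ) : ℂ)
          - ((‖K k‖ ^ 2 * t / 2 : ℝ) : ℂ)))
        = Complex.I ^ 2 * ((((K k) i : ℝ) : ℂ) ^ 2 *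
          Complex.exp (Complex.I * ((inner ℝ (K k) (x - x₀) : ℝ) : ℂ)
            - ((‖K k‖ ^ 2 * t / 2 : ℝ) : ℂ))) from by ring, Complex.I_sq]
    push_cast
    ring
  rw [Finset.sum_congr rfl fun i _ => h2 i, ← Finset.sum_mul]
  have h3 : ∑ i : Fin n, -(((((K k) i) ^ 2 : ℝ) : ℂ)) = ((-(‖K k‖ ^ 2) : ℝ) : ℂ) := by
    rw [← hnormsq k]
    push_cast
    rw [Finset.sum_neg_distrib]
  rw [h3]
  push_cast
  ring
end

section
/- Let (c_m)_{m∈ℤ} and (d_n)_{n∈ℤ} be absolutely summable families of complex numbers, and let f(θ) = Σ_{m∈ℤ} c_m e^{imθ} and g(θ) = Σ_{n∈ℤ} d_n e^{inθ}. Then for every t > 0 and θ₀ ∈ ℝ, ∫_{−π}^{π} conj(f(θ)) g(θ) ρ_t^{θ₀}(θ) dθ = Σ_{k∈ℤ} ( Σ_{j∈ℤ} conj(c_j) d_{j−k} ) e^{−ikθ₀ − k²t/2}, where ρ_t^{θ₀}(θ) = (1/2π) Σ_{k∈ℤ} e^{ik(θ−θ₀) − k²t/2} is the heat kernel on the circle.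 -/
open Real

lemma norm_exp_eq (x y : ℝ) : ‖Complex.exp ((x:ℂ) + (y:ℂ)*Complex.I)‖ = Real.exp x := by
  rw [Complex.exp_add, norm_mul, Complex.norm_exp_ofReal,
    Complex.norm_exp_ofReal_mul_I, mul_one]

lemma hk_sum {t : ℝ} (ht : 0 < t) : Summable fun k : ℤ => Real.exp (-((k:ℝ)^2*t/2)) := by
  have h := summable_pow_mul_jacobiTheta₂_term_bound 0 (T := t/(2*π)) (by positivity) 0
  refine h.congr fun n => ?_
  rw [pow_zero, one_mul]
  congr 1
  have hπ : (π:ℝ) ≠ 0 := pi_ne_zero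
  field_simp
  ring

lemma int_exp (m : ℤ) :
    (∫ θ : ℝ in (-π)..π, Complex.exp (Complex.I * (m:ℂ) * (θ:ℂ))) =
      if m = 0 then ((2*π : ℝ) : ℂ) else 0 := by
  rcases eq_or_ne m 0 with hm | hm
  · simp only [hm, Int.cast_zero, mul_zero, zero_mul, Complex.exp_zero, if_true]
    rw [intervalIntegral.integral_const]
    ring_nf
    simp
  · rw [if_neg hm]
    have hcne : (Complex.I * (m:ℂ)) ≠ 0 := by
      simp [Complex.I_ne_zero, Int.cast_eq_zero, hm]
    have h := integral_exp_mul_complex (a := -π) (b := π) hcne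
    simp only [mul_assoc] at h ⊢
    rw [h]
    have h2 : Complex.I * ((m:ℂ) * ((π:ℝ):ℂ)) =
        Complex.I * ((m:ℂ) * (((-π:ℝ)):ℂ)) + (m:ℂ) * (2*(π:ℂ)*Complex.I) := by
      push_cast; ring
    rw [h2, Complex.exp_add, Complex.exp_int_mul_two_pi_mul_I, mul_one, sub_self, zero_div]

set_option maxHeartbeats 1000000 in
/-- For absolutely summable Fourier coefficients `(c_m)`, `(d_n)` and
`f(θ) = Σ c_m e^{imθ}`, `g(θ) = Σ d_n e^{inθ}`, one has
`∫_{−π}^{π} conj(f) g ρ_t^{θ₀} dθ = Σ_k (Σ_j conj(c_j) d_{j−k}) e^{−ikθ₀ − k²t/2}`,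
where `ρ_t^{θ₀}(θ) = (1/2π) Σ_k e^{ik(θ−θ₀) − k²t/2}` is the heat kernel on the circle. -/
theorem circle_heatKernel_inner_product (c d : ℤ → ℂ)
    (hc : Summable fun m : ℤ => ‖c m‖) (hd : Summable fun m : ℤ => ‖d m‖)
    (t : ℝ) (ht : 0 < t) (θ₀ : ℝ) :
    ∫ θ in (-π)..π,
        (starRingEnd ℂ) (∑' m : ℤ, c m * Complex.exp (Complex.I * (m : ℂ) * (θ : ℂ))) *
          (∑' m : ℤ, d m * Complex.exp (Complex.I * (m : ℂ) * (θ : ℂ))) *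
          ((1 / (2 * (π : ℂ))) * ∑' k : ℤ,
            Complex.exp (Complex.I * (k : ℂ) * ((θ - θ₀ : ℝ) : ℂ) - (k : ℂ) ^ 2 * (t : ℂ) / 2))
      = ∑' k : ℤ, (∑' j : ℤ, (starRingEnd ℂ) (c j) * d (j - k)) *
          Complex.exp (-(Complex.I * (k : ℂ) * (θ₀ : ℂ)) - (k : ℂ) ^ 2 * (t : ℂ) / 2) := by
  have hπ : (0:ℝ) < π := pi_pos
  have hk := hk_sum ht
  set E : ℤ → ℂ := fun k =>
    Complex.exp (-(Complex.I * (k : ℂ) * (θ₀ : ℂ)) - (k : ℂ) ^ 2 * (t : ℂ) / 2) with hE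
  set F : (ℤ×ℤ)×ℤ → ℝ → ℂ := fun p θ =>
    ((starRingEnd ℂ) (c p.1.1) * Complex.exp (-(Complex.I * (p.1.1:ℂ) * (θ:ℂ)))) *
      (d p.1.2 * Complex.exp (Complex.I * (p.1.2:ℂ) * (θ:ℂ))) *
      Complex.exp (Complex.I * (p.2:ℂ) * ((θ - θ₀ : ℝ):ℂ) - (p.2:ℂ)^2*(t:ℂ)/2) with hF
  -- norm facts
  have hnorm1 : ∀ (j:ℤ) (θ:ℝ),
      ‖(starRingEnd ℂ) (c j) * Complex.exp (-(Complex.I*(j:ℂ)*(θ:ℂ)))‖ = ‖c j‖ := by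
    intro j θ
    have h : -(Complex.I*(j:ℂ)*(θ:ℂ)) = ((0:ℝ):ℂ) + ((-((j:ℝ)*θ):ℝ):ℂ)*Complex.I := by
      push_cast; ring
    rw [norm_mul, h, norm_exp_eq, Real.exp_zero, mul_one, RCLike.norm_conj]
  have hnorm2 : ∀ (n:ℤ) (θ:ℝ),
      ‖d n * Complex.exp (Complex.I*(n:ℂ)*(θ:ℂ))‖ = ‖d n‖ := by
    intro n θ
    have h : Complex.I*(n:ℂ)*(θ:ℂ) = ((0:ℝ):ℂ) + (((n:ℝ)*θ:ℝ):ℂ)*Complex.I := by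
      push_cast; ring
    rw [norm_mul, h, norm_exp_eq, Real.exp_zero, mul_one]
  have hnorm3 : ∀ (k:ℤ) (x:ℝ),
      ‖Complex.exp (Complex.I*(k:ℂ)*(x:ℂ) - (k:ℂ)^2*(t:ℂ)/2)‖ = Real.exp (-((k:ℝ)^2*t/2)) := by
    intro k x
    have h : Complex.I*(k:ℂ)*(x:ℂ) - (k:ℂ)^2*(t:ℂ)/2
        = ((-((k:ℝ)^2*t/2):ℝ):ℂ) + (((k:ℝ)*x:ℝ):ℂ)*Complex.I := by push_cast; ring
    rw [h, norm_exp_eq]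
  have hnormE : ∀ k:ℤ, ‖E k‖ = Real.exp (-((k:ℝ)^2*t/2)) := by
    intro k
    have h : -(Complex.I * (k : ℂ) * (θ₀ : ℂ)) - (k : ℂ) ^ 2 * (t : ℂ) / 2
        = ((-((k:ℝ)^2*t/2):ℝ):ℂ) + ((-((k:ℝ)*θ₀):ℝ):ℂ)*Complex.I := by push_cast; ring
    simp only [hE]
    rw [h, norm_exp_eq]
  have hFnorm : ∀ p θ,
      ‖F p θ‖ = ‖c p.1.1‖ * ‖d p.1.2‖ * Real.exp (-((p.2:ℝ)^2*t/2)) := by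
    intro p θ
    rw [hF]
    simp only [norm_mul]
    rw [← norm_mul, hnorm1, ← norm_mul, hnorm2, hnorm3]
  -- pointwise expansion of the integrand as a single tsum
  have key : ∀ θ : ℝ,
      (starRingEnd ℂ) (∑' m : ℤ, c m * Complex.exp (Complex.I * (m : ℂ) * (θ : ℂ))) *
        (∑' m : ℤ, d m * Complex.exp (Complex.I * (m : ℂ) * (θ : ℂ))) *
        ((1 / (2 * (π : ℂ))) * ∑' k : ℤ,
          Complex.exp (Complex.I * (k : ℂ) * ((θ - θ₀ : ℝ) : ℂ) - (k : ℂ) ^ 2 * (t : ℂ) / 2))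
      = (1 / (2 * (π : ℂ))) * ∑' p : (ℤ×ℤ)×ℤ, F p θ := by
    intro θ
    have hA : Summable fun j:ℤ =>
        ‖(starRingEnd ℂ) (c j) * Complex.exp (-(Complex.I*(j:ℂ)*(θ:ℂ)))‖ :=
      hc.congr fun j => (hnorm1 j θ).symm
    have hB : Summable fun n:ℤ => ‖d n * Complex.exp (Complex.I*(n:ℂ)*(θ:ℂ))‖ :=
      hd.congr fun n => (hnorm2 n θ).symm
    have hR : Summable fun k:ℤ =>
        ‖Complex.exp (Complex.I*(k:ℂ)*((θ-θ₀:ℝ):ℂ) - (k:ℂ)^2*(t:ℂ)/2)‖ :=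
      hk.congr fun k => (hnorm3 k _).symm
    have e1 : (starRingEnd ℂ) (∑' m : ℤ, c m * Complex.exp (Complex.I * (m : ℂ) * (θ : ℂ)))
        = ∑' j : ℤ, (starRingEnd ℂ) (c j) * Complex.exp (-(Complex.I*(j:ℂ)*(θ:ℂ))) := by
      rw [starRingEnd_apply, tsum_star]
      refine tsum_congr fun j => ?_
      rw [star_mul']
      congr 1
      rw [← starRingEnd_apply, ← Complex.exp_conj]
      congr 1
      simp [map_mul, Complex.conj_ofReal]
    rw [e1, mul_left_comm, tsum_mul_tsum_of_summable_norm hA hB,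
      tsum_mul_tsum_of_summable_norm (hA.mul_norm hB) hR]
  rw [intervalIntegral.integral_congr
    (g := fun θ => (1 / (2 * (π : ℂ))) * ∑' p : (ℤ×ℤ)×ℤ, F p θ) (fun θ _ => key θ)]
  rw [intervalIntegral.integral_const_mul, intervalIntegral.integral_of_le (by linarith)]
  have hcont : ∀ p : (ℤ×ℤ)×ℤ, Continuous (F p) := by
    intro p; rw [hF]; fun_prop
  have hint : ∀ p : (ℤ×ℤ)×ℤ,
      MeasureTheory.IntegrableOn (F p) (Set.Ioc (-π) π) :=
    fun p => (hcont p).integrableOn_Ioc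
  have hsum3 : Summable fun p : (ℤ×ℤ)×ℤ =>
      (‖c p.1.1‖ * ‖d p.1.2‖) * Real.exp (-((p.2:ℝ)^2*t/2)) :=
    (hc.mul_of_nonneg hd (fun _ => norm_nonneg _) (fun _ => norm_nonneg _)).mul_of_nonneg hk
      (fun q => mul_nonneg (norm_nonneg _) (norm_nonneg _)) (fun k => (Real.exp_pos _).le)
  have hsum : Summable fun p : (ℤ×ℤ)×ℤ => ∫ θ in Set.Ioc (-π) π, ‖F p θ‖ := by
    refine Summable.congr (hsum3.mul_left (2*π)) fun p => ?_
    rw [show (fun θ => ‖F p θ‖) = fun _ : ℝ => ‖c p.1.1‖ * ‖d p.1.2‖ * Real.exp (-((p.2:ℝ)^2*t/2))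
      from funext fun θ => hFnorm p θ]
    rw [MeasureTheory.setIntegral_const, Real.volume_real_Ioc_of_le (by linarith), smul_eq_mul]
    ring_nf
  rw [← MeasureTheory.integral_tsum_of_summable_integral_norm hint hsum]
  -- compute each integral
  have hterm : ∀ p : (ℤ×ℤ)×ℤ,
      (∫ θ in Set.Ioc (-π) π, F p θ)
        = if p.1.2 + p.2 = p.1.1
            then ((starRingEnd ℂ) (c p.1.1) * d p.1.2 * E p.2) * ((2*π : ℝ) : ℂ) else 0 := by
    rintro ⟨⟨j,n⟩,k⟩
    have hFθ : ∀ θ:ℝ, F ((j,n),k) θ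
        = ((starRingEnd ℂ) (c j) * d n * E k)
            * Complex.exp (Complex.I * ((n - j + k : ℤ):ℂ) * (θ:ℂ)) := by
      intro θ
      have hexp : Complex.exp (-(Complex.I*(j:ℂ)*(θ:ℂ)))
            * Complex.exp (Complex.I*(n:ℂ)*(θ:ℂ))
            * Complex.exp (Complex.I*(k:ℂ)*((θ-θ₀:ℝ):ℂ) - (k:ℂ)^2*(t:ℂ)/2)
          = E k * Complex.exp (Complex.I * ((n - j + k : ℤ):ℂ) * (θ:ℂ)) := by
        rw [hE, ← Complex.exp_add, ← Complex.exp_add, ← Complex.exp_add]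
        congr 1
        push_cast
        ring
      calc F ((j,n),k) θ
          = ((starRingEnd ℂ) (c j) * d n)
            * (Complex.exp (-(Complex.I*(j:ℂ)*(θ:ℂ)))
              * Complex.exp (Complex.I*(n:ℂ)*(θ:ℂ))
              * Complex.exp (Complex.I*(k:ℂ)*((θ-θ₀:ℝ):ℂ) - (k:ℂ)^2*(t:ℂ)/2)) := by
            rw [hF]; ring
        _ = ((starRingEnd ℂ) (c j) * d n)
            * (E k * Complex.exp (Complex.I * ((n - j + k : ℤ):ℂ) * (θ:ℂ))) := by rw [hexp]
        _ = ((starRingEnd ℂ) (c j) * d n * E k)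
            * Complex.exp (Complex.I * ((n - j + k : ℤ):ℂ) * (θ:ℂ)) := by ring
    rw [← intervalIntegral.integral_of_le (by linarith : -π ≤ π)]
    rw [intervalIntegral.integral_congr (g := fun θ =>
      ((starRingEnd ℂ) (c j) * d n * E k)
        * Complex.exp (Complex.I * ((n - j + k : ℤ):ℂ) * (θ:ℂ))) (fun θ _ => hFθ θ)]
    rw [intervalIntegral.integral_const_mul, int_exp, mul_ite, mul_zero]
    exact if_congr (by dsimp only; omega) rfl rfl
  rw [tsum_congr hterm]
  -- reindex the sum: only terms with n + k = j survive
  set i : ℤ×ℤ → (ℤ×ℤ)×ℤ := fun q => ((q.2, q.2 - q.1), q.1) with hi_def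
  have hi : Function.Injective i := by
    intro q q' h
    simp only [hi_def, Prod.mk.injEq] at h
    exact Prod.ext h.2 h.1.1
  have hsupp : (Function.support fun p : (ℤ×ℤ)×ℤ =>
      if p.1.2 + p.2 = p.1.1
        then ((starRingEnd ℂ) (c p.1.1) * d p.1.2 * E p.2) * ((2*π : ℝ) : ℂ) else 0)
      ⊆ Set.range i := by
    intro p hp
    have hcond : p.1.2 + p.2 = p.1.1 := by
      by_contra hcon
      exact hp (if_neg hcon)
    refine ⟨(p.2, p.1.1), ?_⟩
    simp only [hi_def]
    exact Prod.ext (Prod.ext rfl (by dsimp only; omega)) rfl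
  rw [← hi.tsum_eq hsupp]
  have hHi : ∀ q : ℤ×ℤ,
      (if (i q).1.2 + (i q).2 = (i q).1.1
        then ((starRingEnd ℂ) (c (i q).1.1) * d (i q).1.2 * E (i q).2) * ((2*π : ℝ) : ℂ) else 0)
      = ((starRingEnd ℂ) (c q.2) * d (q.2 - q.1) * E q.1) * ((2*π : ℝ) : ℂ) := by
    intro q
    simp only [hi_def]
    rw [if_pos (by omega)]
  rw [tsum_congr hHi, tsum_mul_right]
  -- kill the constants
  have h2π : ((2*π : ℝ) : ℂ) ≠ 0 := by
    simp only [ne_eq, Complex.ofReal_eq_zero]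
    positivity
  rw [mul_comm (1 / (2 * (π : ℂ)))]
  rw [show ((2*π : ℝ) : ℂ) = 2 * (π:ℂ) by push_cast; ring] at h2π ⊢
  rw [mul_assoc, mul_one_div, div_self h2π, mul_one]
  -- split the double sum
  have hGsum : Summable fun q : ℤ×ℤ => (starRingEnd ℂ) (c q.2) * d (q.2 - q.1) * E q.1 := by
    have hcd : Summable fun q : ℤ×ℤ => ‖c q.1‖ * ‖d q.2‖ :=
      hc.mul_of_nonneg hd (fun _ => norm_nonneg _) (fun _ => norm_nonneg _)
    have hinj : Function.Injective (fun q : ℤ×ℤ => ((q.2, q.2 - q.1) : ℤ×ℤ)) := by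
      intro a b h
      simp only [Prod.mk.injEq] at h
      exact Prod.ext (by omega) h.1
    have hbd : Summable fun q : ℤ×ℤ => ‖c q.2‖ * ‖d (q.2 - q.1)‖ :=
      (hcd.comp_injective hinj).congr fun q => rfl
    refine Summable.of_norm_bounded hbd fun q => ?_
    calc ‖(starRingEnd ℂ) (c q.2) * d (q.2 - q.1) * E q.1‖
        = ‖c q.2‖ * ‖d (q.2 - q.1)‖ * Real.exp (-((q.1:ℝ)^2*t/2)) := by
          rw [norm_mul, norm_mul, RCLike.norm_conj, hnormE]
      _ ≤ ‖c q.2‖ * ‖d (q.2 - q.1)‖ * 1 := by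
          gcongr
          exact Real.exp_le_one_iff.mpr (neg_nonpos.mpr (by positivity))
      _ = ‖c q.2‖ * ‖d (q.2 - q.1)‖ := mul_one _
  have hfib : ∀ k : ℤ, Summable fun j : ℤ => (starRingEnd ℂ) (c j) * d (j - k) * E k := by
    intro k
    have hB : ∀ n, ‖d n‖ ≤ ∑' n, ‖d n‖ := fun n => Summable.le_tsum hd n fun _ _ => norm_nonneg _
    refine Summable.of_norm_bounded (hc.mul_right (∑' n, ‖d n‖)) fun j => ?_
    calc ‖(starRingEnd ℂ) (c j) * d (j - k) * E k‖
        = ‖c j‖ * ‖d (j - k)‖ * Real.exp (-((k:ℝ)^2*t/2)) := by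
          rw [norm_mul, norm_mul, RCLike.norm_conj, hnormE]
      _ ≤ ‖c j‖ * (∑' n, ‖d n‖) * 1 := by
          apply mul_le_mul _ (Real.exp_le_one_iff.mpr (neg_nonpos.mpr (by positivity)))
            (Real.exp_pos _).le (mul_nonneg (norm_nonneg _) (tsum_nonneg fun _ => norm_nonneg _))
          exact mul_le_mul_of_nonneg_left (hB _) (norm_nonneg _)
      _ = ‖c j‖ * (∑' n, ‖d n‖) := mul_one _
  rw [Summable.tsum_prod' hGsum hfib]
  refine tsum_congr fun k => ?_
  dsimp only
  exact tsum_mul_right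
end

section
/- For every t > 0 and (x₀, y₀) ∈ ℝ², the function ν_t(x, y) = (1/(2π√(2πt))) e^{−(y−y₀)²/(2t)} Σ_{n∈ℤ} e^{in(x−x₀) − n²t/2} (whose defining series converges absolutely for t > 0) satisfies the heat equation ∂ν_t/∂t = (1/2)(∂²ν_t/∂x² + ∂²ν_t/∂y²). -/
open Real

private lemma gauss_summable {a : ℝ} (ha : 0 < a) (k : ℕ) :
    Summable fun m : ℤ => |(m : ℝ)| ^ k * rexp (-(a * (m : ℝ) ^ 2)) := by
  have h := summable_pow_mul_jacobiTheta₂_term_bound 0 (T := a / π) (div_pos ha pi_pos) k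
  refine h.congr fun m => ?_
  have hπ : (π : ℝ) ≠ 0 := pi_ne_zero
  congr 1
  · push_cast; ring
  · congr 1; field_simp; ring

private noncomputable def hkTerm (c : ℝ) (m : ℤ) (s x : ℝ) : ℂ :=
  Complex.exp (Complex.I * (m : ℂ) * ((x - c : ℝ) : ℂ) - (m : ℂ) ^ 2 * (s : ℂ) / 2)

private lemma hkTerm_norm (c : ℝ) (m : ℤ) (s x : ℝ) :
    ‖hkTerm c m s x‖ = rexp (-(s / 2 * (m : ℝ) ^ 2)) := by
  rw [hkTerm, Complex.norm_exp]
  congr 1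
  simp [Complex.sub_re, Complex.div_re, Complex.mul_re, Complex.mul_im, Complex.normSq,
    ← Complex.ofReal_intCast, ← Complex.ofReal_pow]
  ring

private lemma hkTerm_hasDerivAt_x (c : ℝ) (m : ℤ) (s x : ℝ) :
    HasDerivAt (fun u => hkTerm c m s u) (Complex.I * m * hkTerm c m s x) x := by
  have h1 : HasDerivAt (fun u : ℝ => ((u - c : ℝ) : ℂ)) 1 x := by
    simpa using ((hasDerivAt_id x).sub_const c).ofReal_comp
  have h2 : HasDerivAt (fun u : ℝ => Complex.I * (m : ℂ) * ((u - c : ℝ) : ℂ)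
      - (m : ℂ) ^ 2 * (s : ℂ) / 2) (Complex.I * m) x := by
    simpa using (h1.const_mul (Complex.I * (m : ℂ))).sub_const ((m : ℂ) ^ 2 * (s : ℂ) / 2)
  simpa [hkTerm, mul_comm] using h2.cexp

private lemma hkTerm_hasDerivAt_t (c : ℝ) (m : ℤ) (s x : ℝ) :
    HasDerivAt (fun u : ℝ => hkTerm c m u x) (-(m : ℂ) ^ 2 / 2 * hkTerm c m s x) s := by
  have h1 : HasDerivAt (fun u : ℝ => ((u : ℝ) : ℂ)) 1 s := by
    simpa using (hasDerivAt_id s).ofReal_comp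
  have h2 : HasDerivAt (fun u : ℝ => Complex.I * (m : ℂ) * ((x - c : ℝ) : ℂ)
      - (m : ℂ) ^ 2 * ((u : ℝ) : ℂ) / 2) (-(m : ℂ) ^ 2 / 2) s := by
    have := (((h1.const_mul ((m : ℂ) ^ 2)).div_const 2).const_sub
      (Complex.I * (m : ℂ) * ((x - c : ℝ) : ℂ)))
    refine this.congr_deriv ?_
    ring
  simpa [hkTerm, mul_comm] using h2.cexp

private noncomputable def hkGauss (y₀ s y : ℝ) : ℝ :=
  1 / (2 * π * Real.sqrt (2 * π * s)) * rexp (-(y - y₀) ^ 2 / (2 * s))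

private lemma hkGauss_hasDerivAt_y (y₀ t : ℝ) (ht : 0 < t) (y : ℝ) :
    HasDerivAt (fun v => hkGauss y₀ t v) (hkGauss y₀ t y * (-(y - y₀) / t)) y := by
  have h0 : HasDerivAt (fun v : ℝ => v - y₀) 1 y := (hasDerivAt_id y).sub_const y₀
  have h1 : HasDerivAt (fun v : ℝ => -(v - y₀) ^ 2 / (2 * t))
      (-(2 * (y - y₀)) / (2 * t)) y := by
    simpa using ((h0.pow 2).neg).div_const (2 * t)
  have h2 := (h1.exp).const_mul (1 / (2 * π * Real.sqrt (2 * π * t)))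
  refine h2.congr_deriv ?_
  unfold hkGauss
  field_simp

private lemma hkGauss_hasDerivAt_yy (y₀ t : ℝ) (ht : 0 < t) (y : ℝ) :
    HasDerivAt (fun v => hkGauss y₀ t v * (-(v - y₀) / t))
      (hkGauss y₀ t y * ((y - y₀) ^ 2 / t ^ 2 - 1 / t)) y := by
  have h0 : HasDerivAt (fun v : ℝ => -(v - y₀) / t) (-1 / t) y := by
    simpa using (((hasDerivAt_id y).sub_const y₀).neg).div_const t
  have h := (hkGauss_hasDerivAt_y y₀ t ht y).mul h0
  refine h.congr_deriv ?_
  have ht' : t ≠ 0 := ht.ne'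
  field_simp
  ring

private lemma hkGauss_hasDerivAt_t (y₀ : ℝ) {t : ℝ} (ht : 0 < t) (y : ℝ) :
    HasDerivAt (fun s => hkGauss y₀ s y)
      (hkGauss y₀ t y * ((y - y₀) ^ 2 / (2 * t ^ 2) - 1 / (2 * t))) t := by
  have hπ : (0 : ℝ) < π := pi_pos
  have h2πt : (0 : ℝ) < 2 * π * t := by positivity
  set Q := Real.sqrt (2 * π * t) with hQ
  have hQpos : 0 < Q := Real.sqrt_pos.mpr h2πt
  have hQ2 : Q ^ 2 = 2 * π * t := Real.sq_sqrt h2πt.le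
  have hlin : HasDerivAt (fun s : ℝ => 2 * π * s) (2 * π) t := by
    simpa using (hasDerivAt_id t).const_mul (2 * π)
  have hsq : HasDerivAt (fun s : ℝ => Real.sqrt (2 * π * s)) (1 / (2 * Q) * (2 * π)) t :=
    (Real.hasDerivAt_sqrt h2πt.ne').comp t hlin
  have hu : HasDerivAt (fun s : ℝ => 2 * π * Real.sqrt (2 * π * s))
      (2 * π * (1 / (2 * Q) * (2 * π))) t := hsq.const_mul (2 * π)
  have hinv := hu.inv (by positivity : 2 * π * Q ≠ 0)
  have hden : HasDerivAt (fun s : ℝ => 2 * s) 2 t := by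
    simpa using (hasDerivAt_id t).const_mul (2 : ℝ)
  have hexp := ((hasDerivAt_const t (-(y - y₀) ^ 2)).div hden (by positivity : 2 * t ≠ 0)).exp
  have hG := hinv.mul hexp
  simp only [hkGauss, one_div]
  refine hG.congr_deriv ?_
  simp only [Pi.inv_apply, Pi.div_apply]
  rw [← hQ]
  generalize rexp (-(y - y₀) ^ 2 / (2 * t)) = E
  have ht' : t = Q ^ 2 / (2 * π) := by rw [hQ2]; field_simp
  rw [ht']
  have hQ3 : Q ≠ 0 := hQpos.ne'
  field_simp
  ring

/-- The heat kernel on the cylinder `S¹ × ℝ`,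
`ν_t(x,y) = (1/(2π√(2πt))) e^{−(y−y₀)²/(2t)} Σ_{n∈ℤ} e^{in(x−x₀) − n²t/2}`, has an
absolutely convergent defining series for `t > 0` and satisfies the heat equation
`∂ν/∂t = (1/2)(∂²ν/∂x² + ∂²ν/∂y²)`. -/
theorem cylinder_heatKernel_heatEquation (x₀ y₀ : ℝ) :
    let ν : ℝ → ℝ → ℝ → ℂ := fun t x y =>
      ((1 / (2 * π * Real.sqrt (2 * π * t)) * Real.exp (-(y - y₀) ^ 2 / (2 * t)) : ℝ) : ℂ) *
        ∑' m : ℤ, Complex.exp (Complex.I * (m : ℂ) * ((x - x₀ : ℝ) : ℂ) - (m : ℂ) ^ 2 * (t : ℂ) / 2)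
    ∀ (t : ℝ), 0 < t → ∀ x y : ℝ,
      (Summable fun m : ℤ =>
        ‖Complex.exp (Complex.I * (m : ℂ) * ((x - x₀ : ℝ) : ℂ) - (m : ℂ) ^ 2 * (t : ℂ) / 2)‖) ∧
      deriv (fun s : ℝ => ν s x y) t
        = (1 / 2) * (deriv (deriv (fun x' : ℝ => ν t x' y)) x
            + deriv (deriv (fun y' : ℝ => ν t x y')) y) := by
  intro ν t ht x y
  -- summability of norms
  have hnorm_sum : ∀ s : ℝ, 0 < s → Summable fun m : ℤ => ‖hkTerm x₀ m s x‖ := by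
    intro s hs
    have h0 := gauss_summable (half_pos hs) 0
    simp only [pow_zero, one_mul] at h0
    exact h0.congr fun m => (hkTerm_norm x₀ m s x).symm
  have hval_sum : Summable fun m : ℤ => hkTerm x₀ m t x :=
    (hnorm_sum t ht).of_norm
  constructor
  · exact hnorm_sum t ht
  -- bounds
  have hu1 : Summable fun m : ℤ => |(m : ℝ)| * rexp (-(t / 2 * (m : ℝ) ^ 2)) := by
    have := gauss_summable (half_pos ht) 1
    simpa [pow_one, mul_comm] using this
  have hu2 : Summable fun m : ℤ => |(m : ℝ)| ^ 2 * rexp (-(t / 2 * (m : ℝ) ^ 2)) := by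
    have := gauss_summable (half_pos ht) 2
    simpa [mul_comm] using this
  have hu3 : Summable fun m : ℤ => |(m : ℝ)| ^ 2 / 2 * rexp (-(t / 4 * (m : ℝ) ^ 2)) := by
    have := (gauss_summable (by positivity : (0:ℝ) < t / 4) 2).div_const 2
    exact this.congr fun m => by ring
  have hnormI : ∀ (m : ℤ) (s u : ℝ), ‖Complex.I * m * hkTerm x₀ m s u‖
      = |(m : ℝ)| * rexp (-(s / 2 * (m : ℝ) ^ 2)) := by
    intro m s u
    rw [norm_mul, norm_mul, Complex.norm_I, one_mul, hkTerm_norm]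
    norm_num [Complex.norm_intCast]
  -- x-derivatives of the theta sum
  have hΘx : ∀ x' : ℝ, HasDerivAt (fun u => ∑' m : ℤ, hkTerm x₀ m t u)
      (∑' m : ℤ, Complex.I * m * hkTerm x₀ m t x') x' := by
    intro x'
    refine hasDerivAt_tsum (y₀ := x) hu1 (fun m u => hkTerm_hasDerivAt_x x₀ m t u)
      (fun m u => le_of_eq (hnormI m t u)) hval_sum x'
  have hval_sum1 : Summable fun m : ℤ => Complex.I * m * hkTerm x₀ m t x :=
    Summable.of_norm (hu1.congr fun m => (hnormI m t x).symm)
  have hΘxx : HasDerivAt (fun u => ∑' m : ℤ, Complex.I * m * hkTerm x₀ m t u)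
      (∑' m : ℤ, Complex.I * m * (Complex.I * m * hkTerm x₀ m t x)) x := by
    refine hasDerivAt_tsum (y₀ := x) hu2
      (fun m u => (hkTerm_hasDerivAt_x x₀ m t u).const_mul (Complex.I * m))
      (fun m u => ?_) hval_sum1 x
    rw [norm_mul, norm_mul, Complex.norm_I, one_mul, hnormI, Complex.norm_intCast]
    exact le_of_eq (by ring)
  -- t-derivative of the theta sum
  have hΘt : HasDerivAt (fun s : ℝ => ∑' m : ℤ, hkTerm x₀ m s x)
      (∑' m : ℤ, -(m : ℂ) ^ 2 / 2 * hkTerm x₀ m t x) t := by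
    have htmem : t ∈ Set.Ioi (t / 2) := Set.mem_Ioi.mpr (half_lt_self ht)
    refine hasDerivAt_tsum_of_isPreconnected hu3 isOpen_Ioi isPreconnected_Ioi
      (fun m s _ => hkTerm_hasDerivAt_t x₀ m s x) (fun m s hs => ?_) htmem hval_sum htmem
    have hs' : t / 2 < s := hs
    rw [norm_mul, hkTerm_norm]
    have h1 : ‖-(m : ℂ) ^ 2 / 2‖ = |(m : ℝ)| ^ 2 / 2 := by
      rw [norm_div, norm_neg, norm_pow]
      norm_num [Complex.norm_intCast]
    rw [h1]
    refine mul_le_mul_of_nonneg_left ?_ (by positivity)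
    apply Real.exp_le_exp.2
    have : t / 4 * (m : ℝ) ^ 2 ≤ s / 2 * (m : ℝ) ^ 2 :=
      mul_le_mul_of_nonneg_right (by linarith) (sq_nonneg _)
    linarith
  -- rewrite ν in terms of hkGauss and hkTerm
  have e1 : (fun s : ℝ => ν s x y)
      = fun s => ((hkGauss y₀ s y : ℝ) : ℂ) * ∑' m : ℤ, hkTerm x₀ m s x := rfl
  have e2 : (fun x' : ℝ => ν t x' y)
      = fun x' => ((hkGauss y₀ t y : ℝ) : ℂ) * ∑' m : ℤ, hkTerm x₀ m t x' := rfl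
  have e3 : (fun y' : ℝ => ν t x y')
      = fun y' => ((hkGauss y₀ t y' : ℝ) : ℂ) * ∑' m : ℤ, hkTerm x₀ m t x := rfl
  rw [e1, e2, e3]
  -- time derivative
  have hT := ((hkGauss_hasDerivAt_t y₀ ht y).ofReal_comp).mul hΘt
  rw [HasDerivAt.deriv (f := fun s : ℝ => ((hkGauss y₀ s y : ℝ) : ℂ) * ∑' m : ℤ, hkTerm x₀ m s x) hT]
  -- second x derivative
  have dx1 : deriv (fun x' => ((hkGauss y₀ t y : ℝ) : ℂ) * ∑' m : ℤ, hkTerm x₀ m t x')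
      = fun x' => ((hkGauss y₀ t y : ℝ) : ℂ) * ∑' m : ℤ, Complex.I * m * hkTerm x₀ m t x' :=
    funext fun x' => ((hΘx x').const_mul _).deriv
  rw [dx1, (hΘxx.const_mul ((hkGauss y₀ t y : ℝ) : ℂ)).deriv]
  -- second y derivative
  have dy1 : deriv (fun y' => ((hkGauss y₀ t y' : ℝ) : ℂ) * ∑' m : ℤ, hkTerm x₀ m t x)
      = fun y' => ((hkGauss y₀ t y' * (-(y' - y₀) / t) : ℝ) : ℂ) * ∑' m : ℤ, hkTerm x₀ m t x :=
    funext fun y' => (((hkGauss_hasDerivAt_y y₀ t ht y').ofReal_comp).mul_const _).deriv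
  rw [dy1, (((hkGauss_hasDerivAt_yy y₀ t ht y).ofReal_comp).mul_const _).deriv]
  -- algebraic identity
  have hSxx : (∑' m : ℤ, Complex.I * m * (Complex.I * m * hkTerm x₀ m t x))
      = 2 * ∑' m : ℤ, -(m : ℂ) ^ 2 / 2 * hkTerm x₀ m t x := by
    rw [← tsum_mul_left]
    refine tsum_congr fun m => ?_
    linear_combination ((m : ℂ) ^ 2 * hkTerm x₀ m t x) * Complex.I_sq
  rw [hSxx]
  push_cast
  ring
end

section
/- Let t > 0 and let φ : ℂ → ℂ be an entire function with ∫_ℂ |φ(w)|² e^{−|w|²/t} dA(w) < ∞, where dA is the Lebesgue (area) measure on ℂ. Then for every z ∈ ℂ, φ(z) = (1/(πt)) ∫_ℂ e^{z·conj(w)/t} φ(w) e^{−|w|²/t} dA(w). -/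
set_option maxHeartbeats 1000000

open Real MeasureTheory Set Complex

-- circle mean value
lemma circle_mean (ψ : ℂ → ℂ) (hψ : Differentiable ℂ ψ) {r : ℝ} (hr : 0 < r) :
    ∫ θ in (0:ℝ)..2*π, ψ (circleMap 0 r θ) = (2*π : ℝ) * ψ 0 := by
  have h := circleIntegral_sub_center_inv_smul_of_differentiable_on_off_countable hr
    Set.countable_empty (hψ.continuous.continuousOn (s := Metric.closedBall 0 r))
    (fun z _ => hψ z)
  rw [circleIntegral] at h
  have h2 : ∀ θ : ℝ, deriv (circleMap 0 r) θ • ((circleMap 0 r θ - 0)⁻¹ • ψ (circleMap 0 r θ))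
      = Complex.I * ψ (circleMap 0 r θ) := by
    intro θ
    have hne : circleMap 0 r θ ≠ 0 := circleMap_ne_center hr.ne'
    rw [deriv_circleMap, sub_zero, smul_eq_mul, smul_eq_mul]
    field_simp
  simp_rw [h2] at h
  rw [intervalIntegral.integral_const_mul] at h
  have hI : (Complex.I : ℂ) ≠ 0 := Complex.I_ne_zero
  have := h
  rw [smul_eq_mul] at this
  -- this : I * ∫ = 2πI * ψ 0
  apply mul_left_cancel₀ hI
  rw [this]
  push_cast
  ring


lemma integrableOn_comp_polarCoord_symm_real {E : Type*} [NormedAddCommGroup E] [NormedSpace ℝ E]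
    (f : ℝ × ℝ → E) (hf : Integrable f) :
    IntegrableOn (fun p : ℝ × ℝ => p.1 • f (polarCoord.symm p)) polarCoord.target := by
  set B : ℝ × ℝ → ℝ × ℝ →L[ℝ] ℝ × ℝ := fun p =>
    LinearMap.toContinuousLinearMap (Matrix.toLin (Module.Basis.finTwoProd ℝ) (Module.Basis.finTwoProd ℝ)
      !![Real.cos p.2, -p.1 * Real.sin p.2; Real.sin p.2, p.1 * Real.cos p.2])
  have A : ∀ p ∈ polarCoord.target, HasFDerivWithinAt polarCoord.symm (B p) polarCoord.target p :=
    fun p _ => (hasFDerivAt_polarCoord_symm p).hasFDerivWithinAt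
  have B_det : ∀ p, (B p).det = p.1 := by
    intro p
    conv_rhs => rw [← one_mul p.1, ← Real.cos_sq_add_sin_sq p.2]
    simp only [B, neg_mul, LinearMap.det_toContinuousLinearMap, LinearMap.det_toLin,
      Matrix.det_fin_two_of, sub_neg_eq_add]
    ring
  have hinj : Set.InjOn polarCoord.symm polarCoord.target := by
    have := polarCoord.symm.injOn
    rwa [OpenPartialHomeomorph.symm_source] at this
  have himg : IntegrableOn f (polarCoord.symm '' polarCoord.target) := hf.integrableOn
  have := (integrableOn_image_iff_integrableOn_abs_det_fderiv_smul volume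
    polarCoord.open_target.measurableSet A hinj f).mp himg
  refine this.congr_fun (fun p hp => ?_) polarCoord.open_target.measurableSet
  dsimp only
  rw [B_det, abs_of_pos hp.1]

lemma integrableOn_comp_polarCoord_symm {E : Type*} [NormedAddCommGroup E] [NormedSpace ℝ E]
    (f : ℂ → E) (hf : Integrable f) :
    IntegrableOn (fun p : ℝ × ℝ => p.1 • f (Complex.polarCoord.symm p)) polarCoord.target := by
  have h1 : Integrable (f ∘ Complex.measurableEquivRealProd.symm) :=
    (MeasurePreserving.integrable_comp_emb Complex.volume_preserving_equiv_real_prod.symm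
      Complex.measurableEquivRealProd.symm.measurableEmbedding).mpr hf
  have h2 := integrableOn_comp_polarCoord_symm_real _ h1
  refine h2.congr_fun (fun p _ => ?_) polarCoord.open_target.measurableSet
  rfl


lemma gaussian_mean (t : ℝ) (ht : 0 < t) (ψ : ℂ → ℂ) (hψ : Differentiable ℂ ψ)
    (h : Integrable (fun u : ℂ => ψ u * ((Real.exp (-‖u‖^2 / t) : ℝ) : ℂ))) :
    ∫ u : ℂ, ψ u * ((Real.exp (-‖u‖^2 / t) : ℝ) : ℂ) = ((π * t : ℝ) : ℂ) * ψ 0 := by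
  set g : ℂ → ℂ := fun u => ψ u * ((Real.exp (-‖u‖^2 / t) : ℝ) : ℂ) with hg_def
  rw [← Complex.integral_comp_polarCoord_symm g]
  have hg := integrableOn_comp_polarCoord_symm g h
  rw [polarCoord_target] at hg ⊢
  rw [Measure.volume_eq_prod ℝ ℝ] at hg
  have hfub : ∫ p in Ioi (0:ℝ) ×ˢ Ioo (-π) π, p.1 • g (Complex.polarCoord.symm p)
      = ∫ r in Ioi (0:ℝ), ∫ θ in Ioo (-π) π, r • g (Complex.polarCoord.symm (r, θ)) := by
    rw [Measure.volume_eq_prod ℝ ℝ]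
    exact MeasureTheory.setIntegral_prod _ hg
  rw [hfub]
  have hsymm : ∀ (r θ : ℝ), Complex.polarCoord.symm (r, θ) = circleMap 0 r θ := by
    intro r θ
    simp [circleMap, Complex.exp_mul_I, Complex.ofReal_cos, Complex.ofReal_sin]
  have hinner : ∀ r ∈ Ioi (0:ℝ),
      ∫ θ in Ioo (-π) π, r • g (Complex.polarCoord.symm (r, θ))
        = ((r * Real.exp (-r^2 / t) : ℝ) : ℂ) * (((2*π : ℝ) : ℂ) * ψ 0) := by
    intro r hr
    have hr' : (0:ℝ) < r := hr
    have hnorm : ∀ θ : ℝ, ‖circleMap 0 r θ‖ = r := by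
      intro θ
      rw [norm_circleMap_zero, abs_of_pos hr']
    have : ∀ θ : ℝ, r • g (Complex.polarCoord.symm (r, θ))
        = ((r * Real.exp (-r^2 / t) : ℝ) : ℂ) * ψ (circleMap 0 r θ) := by
      intro θ
      rw [hg_def]
      simp only [hnorm, hsymm, Complex.real_smul]
      push_cast
      ring
    simp_rw [this]
    rw [MeasureTheory.integral_const_mul]
    congr 1
    have hIoo : ∫ θ in Ioo (-π) π, ψ (circleMap 0 r θ) = ∫ θ in (-π)..π, ψ (circleMap 0 r θ) := by
      rw [intervalIntegral.integral_of_le (by linarith [Real.pi_pos]),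
        MeasureTheory.integral_Ioc_eq_integral_Ioo]
    have hper : Function.Periodic (fun θ : ℝ => ψ (circleMap 0 r θ)) (2*π) :=
      (periodic_circleMap 0 r).comp ψ
    have hshift := hper.intervalIntegral_add_eq (-π) 0
    rw [hIoo]
    have hπ : -π + 2*π = π := by ring
    rw [show (-π : ℝ) + 2*π = π by ring, zero_add] at hshift
    rw [hshift, circle_mean ψ hψ hr']
  rw [MeasureTheory.setIntegral_congr_fun measurableSet_Ioi hinner]
  rw [MeasureTheory.integral_mul_const]
  have hre : (0:ℝ) < ((1/t : ℂ)).re := by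
    simp only [one_div, Complex.inv_re, Complex.ofReal_re, Complex.normSq_ofReal]
    positivity
  have hcast : ∀ r : ℝ, ((r * Real.exp (-r^2 / t) : ℝ) : ℂ)
      = (r : ℂ) * Complex.exp (-(1/t : ℂ) * (r:ℂ)^2) := by
    intro r
    push_cast [Complex.ofReal_exp]
    congr 1
    push_cast
    ring_nf
  simp_rw [hcast]
  rw [integral_mul_cexp_neg_mul_sq hre]
  have ht' : (t : ℂ) ≠ 0 := Complex.ofReal_ne_zero.mpr ht.ne'
  push_cast
  field_simp

lemma gauss_int {b : ℝ} (hb : 0 < b) : Integrable (fun v : ℂ => Real.exp (-b * ‖v‖^2)) := by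
  have h := GaussianFourier.integrable_cexp_neg_mul_sq_norm_add (V := ℂ) (b := (b:ℂ))
    (by simpa using hb) 0 0
  refine h.norm.congr (Filter.Eventually.of_forall fun v => ?_)
  show ‖cexp (-↑b * ↑‖v‖ ^ 2 + 0 * ((inner ℝ (0:ℂ) v:ℝ):ℂ))‖ = rexp (-b * ‖v‖ ^ 2)
  rw [Complex.norm_exp]
  congr 1
  have : -(b:ℂ) * (‖v‖:ℂ)^2 + 0 * ((inner ℝ (0:ℂ) v : ℝ):ℂ) = ((-b * ‖v‖^2 : ℝ) : ℂ) := by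
    push_cast; ring
  rw [this, Complex.ofReal_re]

/-- Reproducing property of the Segal–Bargmann space: if `φ` is entire
and square integrable against the Gaussian weight `e^{−|w|²/t}`, then
`φ(z) = (1/(πt)) ∫_ℂ e^{z·conj(w)/t} φ(w) e^{−|w|²/t} dA(w)`. -/
theorem segalBargmann_reproducing (t : ℝ) (ht : 0 < t) (φ : ℂ → ℂ)
    (hφ : Differentiable ℂ φ)
    (hint : Integrable (fun w : ℂ => ‖φ w‖ ^ 2 * Real.exp (-‖w‖ ^ 2 / t))) :
    ∀ z : ℂ, φ z = ((1 / (π * t) : ℝ) : ℂ) *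
      ∫ w : ℂ, Complex.exp (z * (starRingEnd ℂ) w / (t : ℂ)) * φ w *
        ((Real.exp (-‖w‖ ^ 2 / t) : ℝ) : ℂ) := by
  intro z
  have ht' : (t : ℂ) ≠ 0 := Complex.ofReal_ne_zero.mpr ht.ne'
  set I : ℂ → ℂ := fun w => Complex.exp (z * (starRingEnd ℂ) w / (t : ℂ)) * φ w *
      ((Real.exp (-‖w‖ ^ 2 / t) : ℝ) : ℂ) with hI_def
  set a : ℝ := ‖z‖ with ha_def
  have h2t : (0:ℝ) < 1/(2*t) := by positivity
  have hg2 : Integrable (fun w : ℂ => (1/2) * (‖φ w‖^2 * Real.exp (-‖w‖^2/t))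
      + ((1/2) * Real.exp (2*a^2/t)) * Real.exp (-(1/(2*t)) * ‖w‖^2)) :=
    (hint.const_mul _).add ((gauss_int h2t).const_mul _)
  have hmeas : AEStronglyMeasurable I volume := by
    apply Continuous.aestronglyMeasurable
    apply Continuous.mul
    apply Continuous.mul
    · exact Complex.continuous_exp.comp
        ((continuous_const.mul Complex.continuous_conj).div_const _)
    · exact hφ.continuous
    · exact Complex.continuous_ofReal.comp (Real.continuous_exp.comp (by fun_prop))
  have hbound : ∀ w : ℂ, ‖I w‖ ≤ (1/2) * (‖φ w‖^2 * Real.exp (-‖w‖^2/t))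
      + ((1/2) * Real.exp (2*a^2/t)) * Real.exp (-(1/(2*t)) * ‖w‖^2) := by
    intro w
    have hnI : ‖I w‖ = Real.exp ((z * (starRingEnd ℂ) w / (t:ℂ)).re) * ‖φ w‖
        * Real.exp (-‖w‖^2/t) := by
      rw [hI_def]
      rw [norm_mul, norm_mul, Complex.norm_exp,
        Complex.norm_real, Real.norm_eq_abs,
        _root_.abs_of_nonneg (Real.exp_nonneg _)]
    have hRe : (z * (starRingEnd ℂ) w / (t:ℂ)).re ≤ a * ‖w‖ / t := by
      calc (z * (starRingEnd ℂ) w / (t:ℂ)).re ≤ ‖z * (starRingEnd ℂ) w / (t:ℂ)‖ :=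
            Complex.re_le_norm _
        _ = a * ‖w‖ / t := by
            rw [norm_div, norm_mul]
            simp [ha_def, Complex.norm_real, _root_.abs_of_pos ht]
    set p : ℝ := ‖φ w‖ with hp_def
    set x : ℝ := ‖w‖ with hx_def
    have hp : 0 ≤ p := norm_nonneg _
    have hx : 0 ≤ x := norm_nonneg _
    have step1 : ‖I w‖ ≤ p * Real.exp (a*x/t - x^2/t) := by
      rw [hnI]
      calc Real.exp ((z * (starRingEnd ℂ) w / (t:ℂ)).re) * p * Real.exp (-x^2/t)
          = p * Real.exp ((z * (starRingEnd ℂ) w / (t:ℂ)).re + -x^2/t) := by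
            rw [Real.exp_add]; ring
        _ ≤ p * Real.exp (a*x/t - x^2/t) := by
            refine mul_le_mul_of_nonneg_left (Real.exp_le_exp.mpr ?_) hp
            rw [sub_eq_add_neg, ← neg_div]
            exact add_le_add_left hRe _
    refine step1.trans ?_
    have hsplit : p * Real.exp (a*x/t - x^2/t)
        = (p * Real.exp (-x^2/(2*t))) * Real.exp (a*x/t - x^2/(2*t)) := by
      rw [mul_assoc, ← Real.exp_add]
      congr 2
      field_simp
      ring
    have hamgm : (p * Real.exp (-x^2/(2*t))) * Real.exp (a*x/t - x^2/(2*t))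
        ≤ (1/2) * (p * Real.exp (-x^2/(2*t)))^2 + (1/2) * (Real.exp (a*x/t - x^2/(2*t)))^2 := by
      nlinarith [sq_nonneg (p * Real.exp (-x^2/(2*t)) - Real.exp (a*x/t - x^2/(2*t)))]
    have hsq1 : (p * Real.exp (-x^2/(2*t)))^2 = p^2 * Real.exp (-x^2/t) := by
      rw [mul_pow, sq (Real.exp _), ← Real.exp_add]
      congr 2
      field_simp
      ring
    have hsq2 : (Real.exp (a*x/t - x^2/(2*t)))^2
        ≤ Real.exp (2*a^2/t) * Real.exp (-(1/(2*t)) * x^2) := by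
      rw [sq, ← Real.exp_add, ← Real.exp_add]
      apply Real.exp_le_exp.mpr
      have hineq : 2*(a*x) - x^2 ≤ 2*a^2 - x^2/2 := by nlinarith [sq_nonneg (x - 2*a)]
      have h1 : a*x/t - x^2/(2*t) + (a*x/t - x^2/(2*t)) = (2*(a*x) - x^2)/t := by
        field_simp; ring
      have h2 : 2*a^2/t + -(1/(2*t)) * x^2 = (2*a^2 - x^2/2)/t := by
        field_simp; ring
      rw [h1, h2]
      exact (div_le_div_iff_of_pos_right ht).mpr hineq
    calc p * Real.exp (a*x/t - x^2/t)
        = (p * Real.exp (-x^2/(2*t))) * Real.exp (a*x/t - x^2/(2*t)) := hsplit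
      _ ≤ (1/2) * (p * Real.exp (-x^2/(2*t)))^2 + (1/2) * (Real.exp (a*x/t - x^2/(2*t)))^2 :=
          hamgm
      _ ≤ (1/2) * (p^2 * Real.exp (-x^2/t))
          + ((1/2) * Real.exp (2*a^2/t)) * Real.exp (-(1/(2*t)) * x^2) := by
          rw [hsq1]
          nlinarith [hsq2]
  have hI_int : Integrable I := hg2.mono' hmeas (Filter.Eventually.of_forall hbound)
  set ψ : ℂ → ℂ := fun u => φ (z + u) * Complex.exp (-((starRingEnd ℂ) z) * u / (t:ℂ)) with hψ_def
  have hψ : Differentiable ℂ ψ := by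
    apply Differentiable.mul
    · exact hφ.comp (differentiable_id.const_add z)
    · exact Complex.differentiable_exp.comp (by fun_prop)
  have hnormsq : ∀ w : ℂ, ((‖w‖^2 : ℝ) : ℂ) = w * (starRingEnd ℂ) w := by
    intro w
    rw [Complex.mul_conj]
    norm_cast
    rw [Complex.sq_norm]
  have hIψ : ∀ u : ℂ, I (z + u) = ψ u * ((Real.exp (-‖u‖^2/t) : ℝ) : ℂ) := by
    intro u
    rw [hI_def, hψ_def]
    simp only
    rw [Complex.ofReal_exp, Complex.ofReal_exp]
    have e1 : ∀ (A B C : ℂ), Complex.exp A * B * Complex.exp C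
        = B * Complex.exp (A + C) := by
      intro A B C; rw [Complex.exp_add]; ring
    rw [e1]
    have e2 : ∀ (B D C : ℂ), B * Complex.exp D * Complex.exp C
        = B * Complex.exp (D + C) := by
      intro B D C; rw [Complex.exp_add]; ring
    rw [e2]
    congr 1
    rw [show ((-‖z+u‖^2/t : ℝ) : ℂ) = -(((‖z+u‖^2 : ℝ):ℂ))/t by push_cast; ring,
      show ((-‖u‖^2/t : ℝ) : ℂ) = -(((‖u‖^2 : ℝ):ℂ))/t by push_cast; ring,
      hnormsq, hnormsq, map_add]
    congr 1
    field_simp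
    ring
  have hψint : Integrable (fun u : ℂ => ψ u * ((Real.exp (-‖u‖^2/t) : ℝ) : ℂ)) := by
    have h1 := hI_int.comp_add_left z
    exact h1.congr (Filter.Eventually.of_forall fun u => hIψ u)
  have hmean := gaussian_mean t ht ψ hψ hψint
  have htrans : ∫ u : ℂ, I (z + u) = ∫ w, I w := integral_add_left_eq_self I z
  have hval : ∫ w, I w = ((π * t : ℝ) : ℂ) * ψ 0 := by
    rw [← htrans]
    simp_rw [hIψ]
    exact hmean
  have hψ0 : ψ 0 = φ z := by
    rw [hψ_def]; simp
  rw [hI_def] at hval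
  rw [hval, hψ0]
  have hπt : (π * t : ℝ) ≠ 0 := (mul_pos Real.pi_pos ht).ne'
  have hπt' : ((π * t : ℝ) : ℂ) ≠ 0 := Complex.ofReal_ne_zero.mpr hπt
  rw [show ((1 / (π * t) : ℝ) : ℂ) = 1 / ((π * t : ℝ) : ℂ) by push_cast; ring]
  field_simp
end

section
/- For every t > 0 and all z, w ∈ ℂ, the Gaussian integral identity (1/(πt)) ∫_ℂ e^{z·conj(v)/t} e^{v·conj(w)/t} e^{−|v|²/t} dA(v) = e^{z·conj(w)/t} holds, where dA is the Lebesgue (area) measure on ℂ. -/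
open Real MeasureTheory

/-- The Gaussian integral identity
`(1/(πt)) ∫_ℂ e^{z·conj(v)/t} e^{v·conj(w)/t} e^{−|v|²/t} dA(v) = e^{z·conj(w)/t}`:
the reproducing kernel of the Segal–Bargmann space reproduces itself. -/
theorem segalBargmann_kernel_self_reproducing (t : ℝ) (ht : 0 < t) (z w : ℂ) :
    ((1 / (π * t) : ℝ) : ℂ) *
        ∫ v : ℂ, Complex.exp (z * (starRingEnd ℂ) v / (t : ℂ)) *
          Complex.exp (v * (starRingEnd ℂ) w / (t : ℂ)) *
          ((Real.exp (-‖v‖ ^ 2 / t) : ℝ) : ℂ)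
      = Complex.exp (z * (starRingEnd ℂ) w / (t : ℂ)) := by
  have ht0 : (t : ℂ) ≠ 0 := by exact_mod_cast ht.ne'
  set b : ℂ := -(1 / t) with hbdef
  have hb : b.re < 0 := by
    simp only [hbdef, Complex.neg_re, neg_lt_zero]
    rw [Complex.div_re]
    simp [Complex.normSq]
    positivity
  set c₁ : ℂ := (z + (starRingEnd ℂ) w) / t with hc1
  set c₂ : ℂ := Complex.I * ((starRingEnd ℂ) w - z) / t with hc2
  have key : ∀ v : ℂ,
      Complex.exp (z * (starRingEnd ℂ) v / (t : ℂ)) *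
        Complex.exp (v * (starRingEnd ℂ) w / (t : ℂ)) *
        ((Real.exp (-‖v‖ ^ 2 / t) : ℝ) : ℂ)
      = Complex.exp (b * v.re ^ 2 + c₁ * v.re + 0) *
        Complex.exp (b * v.im ^ 2 + c₂ * v.im + 0) := by
    rintro ⟨x, y⟩
    have hv : (Complex.mk x y) = (x : ℂ) + (y : ℂ) * Complex.I := Complex.mk_eq_add_mul_I x y
    have hre : (Complex.mk x y).re = x := rfl
    have him : (Complex.mk x y).im = y := rfl
    have hcv : (starRingEnd ℂ) (Complex.mk x y) = (x : ℂ) - (y : ℂ) * Complex.I := by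
      rw [hv, map_add, map_mul, Complex.conj_ofReal, Complex.conj_ofReal, Complex.conj_I]
      ring
    have hnorm : ((-‖Complex.mk x y‖ ^ 2 / t : ℝ) : ℂ) = -((x:ℂ)^2 + (y:ℂ)^2) / t := by
      have : (‖Complex.mk x y‖ : ℝ) ^ 2 = x ^ 2 + y ^ 2 := by
        rw [Complex.sq_norm, Complex.normSq_mk]; ring
      push_cast [this]; ring
    rw [Complex.ofReal_exp, ← Complex.exp_add, ← Complex.exp_add, ← Complex.exp_add,
      hcv, hnorm, hre, him]
    nth_rewrite 1 [hv]
    congr 1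
    rw [hbdef, hc1, hc2]
    field_simp
    ring
  simp_rw [key]
  have hsplit : (∫ v : ℂ, Complex.exp (b * v.re ^ 2 + c₁ * v.re + 0) *
      Complex.exp (b * v.im ^ 2 + c₂ * v.im + 0))
      = (∫ x : ℝ, Complex.exp (b * x ^ 2 + c₁ * x + 0)) *
        ∫ y : ℝ, Complex.exp (b * y ^ 2 + c₂ * y + 0) := by
    have h1 : (∫ v : ℂ, Complex.exp (b * v.re ^ 2 + c₁ * v.re + 0) *
        Complex.exp (b * v.im ^ 2 + c₂ * v.im + 0))
        = ∫ p : ℝ × ℝ, Complex.exp (b * p.1 ^ 2 + c₁ * p.1 + 0) *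
          Complex.exp (b * p.2 ^ 2 + c₂ * p.2 + 0) :=
      (Complex.volume_preserving_equiv_real_prod).integral_comp
        Complex.measurableEquivRealProd.measurableEmbedding
        (fun p : ℝ × ℝ => Complex.exp (b * p.1 ^ 2 + c₁ * p.1 + 0) *
          Complex.exp (b * p.2 ^ 2 + c₂ * p.2 + 0))
    rw [h1, MeasureTheory.Measure.volume_eq_prod _ _]
    exact integral_prod_mul (fun x : ℝ => Complex.exp (b * x ^ 2 + c₁ * x + 0))
      (fun y : ℝ => Complex.exp (b * y ^ 2 + c₂ * y + 0))
  rw [hsplit, integral_cexp_quadratic hb, integral_cexp_quadratic hb]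
  have hπt : (π : ℂ) / -b = ((π * t : ℝ) : ℂ) := by
    rw [hbdef]; push_cast; field_simp
  have hπt0 : ((π * t : ℝ) : ℂ) ≠ 0 := by
    exact_mod_cast (mul_pos Real.pi_pos ht).ne'
  have hexp : (0 - c₁ ^ 2 / (4 * b)) + (0 - c₂ ^ 2 / (4 * b)) = z * (starRingEnd ℂ) w / t := by
    rw [hc1, hc2, hbdef]
    have hI : Complex.I ^ 2 = -1 := Complex.I_sq
    field_simp
    ring_nf
    rw [hI]
    ring
  rw [hπt]
  rw [show ((π * t : ℝ) : ℂ) ^ (1/2 : ℂ) * Complex.exp (0 - c₁ ^ 2 / (4 * b)) *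
      (((π * t : ℝ) : ℂ) ^ (1/2 : ℂ) * Complex.exp (0 - c₂ ^ 2 / (4 * b)))
      = (((π * t : ℝ) : ℂ) ^ (1/2 : ℂ) * ((π * t : ℝ) : ℂ) ^ (1/2 : ℂ)) *
        (Complex.exp (0 - c₁ ^ 2 / (4 * b)) * Complex.exp (0 - c₂ ^ 2 / (4 * b))) by ring,
    ← Complex.exp_add, hexp, ← Complex.cpow_add _ _ hπt0]
  norm_num
  have hπ0 : ((π : ℝ) : ℂ) ≠ 0 := by exact_mod_cast Real.pi_ne_zero
  field_simp
end
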